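/- Let (φ, X) be an instance of Paired SAT with X = {(x_1,y_1),…,(x_n,y_n)} and φ a 3-CNF over these variables, and let H be the hypergraph associated to (φ, X) by the gadget construction. If Falsifier has a winning strategy in the Paired SAT game on (φ, X), then Client has a winning strategy in the Client-Waiter game on H. -/

import Mathlib

variable {α : Type*} [DecidableEq α]

lemma card_sdiff_pair_lt {U : Finset α} {x y : α} (hx : x ∈ U) :
    (U \ {x, y}).card < U.card :=
  lt_of_le_of_lt
    (Finset.card_le_card (by
      intro a ha
      simp only [Finset.mem_sdiff, Finset.mem_insert, Finset.mem_singleton,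
        Finset.mem_erase] at ha ⊢
      tauto))
    (Finset.card_erase_lt_of_mem hx)

/-- Client-Waiter game played on the edge set `E`: Client has a winning strategy from the
position in which `U` is the set of unclaimed vertices and `C` is the set of vertices already
claimed by Client.  While at least two vertices are unclaimed, Waiter offers two distinct
unclaimed vertices `x, y`; Client claims one of them and Waiter gets the other.  A last
remaining unclaimed vertex goes to Client.  Client wins if at the end his vertices contain an
edge of `E`. -/
def CWClientWins (E : Set (Finset α)) (U C : Finset α) : Prop :=
  if _h : 2 ≤ U.card then
    ∀ x ∈ U, ∀ y ∈ U, x ≠ y →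
      CWClientWins E (U \ {x, y}) (insert x C) ∨ CWClientWins E (U \ {x, y}) (insert y C)
  else ∃ e ∈ E, e ⊆ C ∪ U
termination_by U.card
decreasing_by all_goals exact card_sdiff_pair_lt (by assumption)

/-- A literal over the variable type `ν`: a variable together with a polarity. -/
abbrev Lit (ν : Type*) := ν × Bool

/-- A clause with exactly three literals. -/
abbrev Clause3 (ν : Type*) := Lit ν × Lit ν × Lit ν

/-- A 3-CNF formula: a list of three-literal clauses. -/
abbrev CNF3 (ν : Type*) := List (Clause3 ν)

def evalLit {ν : Type*} (v : ν → Bool) (l : Lit ν) : Prop := v l.1 = l.2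

def evalClause {ν : Type*} (v : ν → Bool) (c : Clause3 ν) : Prop :=
  evalLit v c.1 ∨ evalLit v c.2.1 ∨ evalLit v c.2.2

def evalCNF {ν : Type*} (v : ν → Bool) (φ : CNF3 ν) : Prop := ∀ c ∈ φ, evalClause v c

/-- Paired SAT game on the pair-index type `I` with winning condition `φ` for Satisfier:
Falsifier has a winning strategy from the position in which `R` is the set of indices not yet
chosen and `x, y` record the values assigned so far.  At each turn Satisfier picks an unchosen
index `i` and a value for `x i`, then Falsifier picks a value for `y i`; when all indices are
exhausted Falsifier wins iff `φ x y` fails. -/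
def PSFalsWins {I : Type*} [DecidableEq I] (φ : (I → Bool) → (I → Bool) → Prop)
    (R : Finset I) (x y : I → Bool) : Prop :=
  if _h : R.Nonempty then
    ∀ i ∈ R, ∀ b : Bool,
      PSFalsWins φ (R.erase i) (Function.update x i b) (Function.update y i true) ∨
      PSFalsWins φ (R.erase i) (Function.update x i b) (Function.update y i false)
  else ¬ φ x y
termination_by R.card
decreasing_by all_goals exact Finset.card_erase_lt_of_mem (by assumption)

/-- Vertices of the gadget hypergraph: for `i : Fin n`,
`(i, 0) = sᵢ⁰`, `(i, 1) = sᵢᵀ`, `(i, 2) = sᵢᶠ`, `(i, 3) = sᵢ¹`,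
`(i, 4) = fᵢ⁰`, `(i, 5) = fᵢᵀ`, `(i, 6) = fᵢᵀ'`, `(i, 7) = fᵢᶠ`. -/
abbrev GVert (n : ℕ) := Fin n × Fin 8

def vs0 {n : ℕ} (i : Fin n) : GVert n := (i, 0)
def vsT {n : ℕ} (i : Fin n) : GVert n := (i, 1)
def vsF {n : ℕ} (i : Fin n) : GVert n := (i, 2)
def vs1 {n : ℕ} (i : Fin n) : GVert n := (i, 3)
def vf0 {n : ℕ} (i : Fin n) : GVert n := (i, 4)
def vfT {n : ℕ} (i : Fin n) : GVert n := (i, 5)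
def vfT' {n : ℕ} (i : Fin n) : GVert n := (i, 6)
def vfF {n : ℕ} (i : Fin n) : GVert n := (i, 7)

def SBlock {n : ℕ} (i : Fin n) : Finset (GVert n) := {vs0 i, vsT i, vsF i, vs1 i}
def FBlock {n : ℕ} (i : Fin n) : Finset (GVert n) := {vf0 i, vfT i, vfT' i, vfF i}

/-- The block edges: all 3-element subsets of each `Sᵢ` and of each `Fᵢ`. -/
def blockEdges (n : ℕ) : Set (Finset (GVert n)) :=
  {e | ∃ i : Fin n, e.card = 3 ∧ (e ⊆ SBlock i ∨ e ⊆ FBlock i)}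

/-- The pair edges `Pᵢ`. -/
def pairEdges (n : ℕ) : Set (Finset (GVert n)) :=
  {e | ∃ i : Fin n,
    e = {vs0 i, vsT i, vf0 i, vfT i} ∨ e = {vs0 i, vfF i, vfT i, vsF i} ∨
    e = {vs0 i, vfF i, vsT i, vfT' i} ∨ e = {vs0 i, vsF i, vf0 i, vfT' i}}

/-- `litSets ℓ` is the family `H_j^k` encoding that the literal `ℓ` is falsified;
`Sum.inl i` is the variable `xᵢ` and `Sum.inr i` is the variable `yᵢ`. -/
def litSets {n : ℕ} : Lit (Fin n ⊕ Fin n) → Set (Finset (GVert n))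
  | (Sum.inl i, true) => {{vs0 i, vsT i}}
  | (Sum.inl i, false) => {{vs0 i, vsF i}}
  | (Sum.inr i, true) => {{vf0 i, vfT i}, {vf0 i, vfT' i}}
  | (Sum.inr i, false) => {{vfF i}}

/-- The clause edges: for each clause `c` of `φ`, all unions `h₁ ∪ h₂ ∪ h₃` with
`h_k ∈ litSets (ℓ_k)`. -/
def clauseEdges (n : ℕ) (φ : CNF3 (Fin n ⊕ Fin n)) : Set (Finset (GVert n)) :=
  {e | ∃ c ∈ φ, ∃ h1 ∈ litSets c.1, ∃ h2 ∈ litSets c.2.1, ∃ h3 ∈ litSets c.2.2,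
    e = h1 ∪ h2 ∪ h3}

/-- All edges of the gadget hypergraph associated to the Paired SAT instance `(φ, X)`. -/
def gadgetEdges (n : ℕ) (φ : CNF3 (Fin n ⊕ Fin n)) : Set (Finset (GVert n)) :=
  blockEdges n ∪ pairEdges n ∪ clauseEdges n φ


set_option maxHeartbeats 1600000
set_option synthInstance.maxSize 2000
set_option maxRecDepth 8000
set_option synthInstance.maxHeartbeats 2000000
set_option linter.unusedSectionVars false

/-! ### Auxiliary machinery for the proof -/

set_option linter.unusedSectionVars false in
lemma cw_two_le_card {U : Finset α} {u v : α} (hu : u ∈ U) (hv : v ∈ U) (huv : u ≠ v) :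
    2 ≤ U.card := Finset.one_lt_card.mpr ⟨u, hu, v, hv, huv⟩

lemma cw_lemA0 {E : Set (Finset α)} {U C : Finset α} {e : Finset α}
    (he : e ∈ E) (hsub : e ⊆ C) : CWClientWins E U C := by
  rw [CWClientWins]
  split
  · intro x hx y hy hxy
    left
    exact cw_lemA0 he (hsub.trans (Finset.subset_insert _ _))
  · exact ⟨e, he, hsub.trans Finset.subset_union_left⟩
termination_by U.card
decreasing_by exact card_sdiff_pair_lt hx

lemma cw_lemA {E : Set (Finset α)} {U C : Finset α} {e : Finset α} {v : α}
    (he : e ∈ E) (hv : v ∈ U) (hsub : e ⊆ insert v C) : CWClientWins E U C := by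
  rw [CWClientWins]
  split
  · intro x hx y hy hxy
    by_cases hvx : v = x
    · left; subst hvx; exact cw_lemA0 he hsub
    by_cases hvy : v = y
    · right; subst hvy; exact cw_lemA0 he hsub
    · left
      refine cw_lemA he ?_ (hsub.trans (Finset.insert_subset_insert _ (Finset.subset_insert _ _)))
      simp [Finset.mem_sdiff, hv, hvx, hvy]
  · refine ⟨e, he, hsub.trans ?_⟩
    intro a ha
    simp only [Finset.mem_insert] at ha
    rcases ha with rfl | ha
    · exact Finset.mem_union_right _ hv
    · exact Finset.mem_union_left _ ha
termination_by U.card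
decreasing_by exact card_sdiff_pair_lt hx

lemma cw_takeStep {E : Set (Finset α)} {D C : Finset α} {x y : α} (v : α) (hv : v = x ∨ v = y)
    (h : CWClientWins E D (insert v C)) :
    CWClientWins E D (insert x C) ∨ CWClientWins E D (insert y C) := by
  rcases hv with rfl | rfl
  · exact Or.inl h
  · exact Or.inr h

lemma cw_subInsert2 {C : Finset α} {f : Finset α} {u z : α} (hf : f ⊆ C ∪ {u, z}) :
    f ⊆ insert z (insert u C) := by
  intro a ha
  have := hf ha
  simp only [Finset.mem_union, Finset.mem_insert, Finset.mem_singleton] at this ⊢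
  tauto

lemma cw_memSdiff2 {U : Finset α} {z x y : α} (hz : z ∈ U) (hzx : z ≠ x) (hzy : z ≠ y) :
    z ∈ U \ {x, y} := by simp [Finset.mem_sdiff, hz, hzx, hzy]

lemma cw_lemE {E : Set (Finset α)} {U C : Finset α} {e t1 t2 : Finset α} {w1 w2 w3 w4 : α}
    (he : e ∈ E) (ht1 : t1 ∈ E) (ht2 : t2 ∈ E)
    (hw1 : w1 ∈ U) (hw2 : w2 ∈ U) (hw3 : w3 ∈ U) (hw4 : w4 ∈ U)
    (h12 : w1 ≠ w2) (h13 : w1 ≠ w3) (h14 : w1 ≠ w4) (h23 : w2 ≠ w3) (h24 : w2 ≠ w4)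
    (h34 : w3 ≠ w4)
    (hes : e ⊆ C ∪ {w1, w2}) (h1s : t1 ⊆ C ∪ {w1, w3}) (h2s : t2 ⊆ C ∪ {w2, w4}) :
    CWClientWins E U C := by
  rw [CWClientWins]
  split
  · intro x hx y hy hxy
    by_cases h1 : w1 = x ∨ w1 = y
    · refine cw_takeStep w1 h1 ?_
      by_cases h2 : w2 = x ∨ w2 = y
      · have hx3 : w3 ≠ x := by rintro rfl; rcases h1 with h1|h1 <;> rcases h2 with h2|h2 <;> simp_all
        have hy3 : w3 ≠ y := by rintro rfl; rcases h1 with h1|h1 <;> rcases h2 with h2|h2 <;> simp_all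
        refine cw_lemA ht1 (cw_memSdiff2 hw3 hx3 hy3) (cw_subInsert2 ?_)
        intro a ha; have := h1s ha
        simp only [Finset.mem_union, Finset.mem_insert, Finset.mem_singleton] at this ⊢
        tauto
      · push_neg at h2
        refine cw_lemA he (cw_memSdiff2 hw2 h2.1 h2.2) (cw_subInsert2 ?_)
        intro a ha; have := hes ha
        simp only [Finset.mem_union, Finset.mem_insert, Finset.mem_singleton] at this ⊢
        tauto
    by_cases h2 : w2 = x ∨ w2 = y
    · push_neg at h1
      refine cw_takeStep w2 h2 ?_
      refine cw_lemA he (cw_memSdiff2 hw1 h1.1 h1.2) (cw_subInsert2 ?_)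
      intro a ha; have := hes ha
      simp only [Finset.mem_union, Finset.mem_insert, Finset.mem_singleton] at this ⊢
      tauto
    by_cases h3 : w3 = x ∨ w3 = y
    · push_neg at h1
      refine cw_takeStep w3 h3 ?_
      refine cw_lemA ht1 (cw_memSdiff2 hw1 h1.1 h1.2) (cw_subInsert2 ?_)
      intro a ha; have := h1s ha
      simp only [Finset.mem_union, Finset.mem_insert, Finset.mem_singleton] at this ⊢
      tauto
    by_cases h4 : w4 = x ∨ w4 = y
    · push_neg at h2
      refine cw_takeStep w4 h4 ?_
      refine cw_lemA ht2 (cw_memSdiff2 hw2 h2.1 h2.2) (cw_subInsert2 ?_)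
      intro a ha; have := h2s ha
      simp only [Finset.mem_union, Finset.mem_insert, Finset.mem_singleton] at this ⊢
      tauto
    · push_neg at h1 h2 h3 h4
      left
      have hmono : (C : Finset α) ⊆ insert x C := Finset.subset_insert _ _
      refine cw_lemE he ht1 ht2 (cw_memSdiff2 hw1 h1.1 h1.2) (cw_memSdiff2 hw2 h2.1 h2.2)
        (cw_memSdiff2 hw3 h3.1 h3.2) (cw_memSdiff2 hw4 h4.1 h4.2) h12 h13 h14 h23 h24 h34
        (hes.trans (Finset.union_subset_union_left hmono))
        (h1s.trans (Finset.union_subset_union_left hmono))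
        (h2s.trans (Finset.union_subset_union_left hmono))
  · exact absurd (cw_two_le_card hw1 hw2 h12) (by assumption)
termination_by U.card
decreasing_by all_goals exact card_sdiff_pair_lt hx

lemma cw_lemB {E : Set (Finset α)} {U C : Finset α} {c v1 v2 v3 : α}
    (hc : c ∈ C) (hv1 : v1 ∈ U) (hv2 : v2 ∈ U) (hv3 : v3 ∈ U)
    (h12 : v1 ≠ v2) (h13 : v1 ≠ v3) (h23 : v2 ≠ v3)
    (ht : ∀ a b : α, a ∈ ({v1, v2, v3} : Finset α) → b ∈ ({v1, v2, v3} : Finset α) → a ≠ b →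
      {c, a, b} ∈ E) :
    CWClientWins E U C := by
  rw [CWClientWins]
  split
  · intro x hx y hy hxy
    have key : ∀ a b z : α, a ∈ ({v1, v2, v3} : Finset α) → b ∈ ({v1, v2, v3} : Finset α) →
        z ∈ ({v1, v2, v3} : Finset α) → a ≠ b → a ≠ z → b ≠ z → (a = x ∨ a = y) →
        z ≠ x → z ≠ y →
        CWClientWins E (U \ {x, y}) (insert x C) ∨ CWClientWins E (U \ {x, y}) (insert y C) := by
      intro a b z ha hb hz hab haz hbz haxy hzx hzy
      refine cw_takeStep a haxy ?_
      have hzU : z ∈ U := by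
        simp only [Finset.mem_insert, Finset.mem_singleton] at hz
        rcases hz with rfl | rfl | rfl <;> assumption
      refine cw_lemA (ht a z ha hz haz) (cw_memSdiff2 hzU hzx hzy) ?_
      intro w hw
      simp only [Finset.mem_insert, Finset.mem_singleton] at hw ⊢
      rcases hw with rfl | rfl | rfl
      · right; right; exact hc
      · right; left; rfl
      · left; rfl
    by_cases h1 : v1 = x ∨ v1 = y
    · by_cases h2 : v2 = x ∨ v2 = y
      · have a1 : v3 ≠ x := by rintro rfl; rcases h1 with h1|h1 <;> rcases h2 with h2|h2 <;> simp_all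
        have a2 : v3 ≠ y := by rintro rfl; rcases h1 with h1|h1 <;> rcases h2 with h2|h2 <;> simp_all
        exact key v1 v2 v3 (by simp) (by simp) (by simp) h12 h13 h23 h1 a1 a2
      · push_neg at h2
        by_cases h3 : v3 = x ∨ v3 = y
        · exact key v1 v3 v2 (by simp) (by simp) (by simp) h13 h12 h23.symm h1 h2.1 h2.2
        · push_neg at h3
          exact key v1 v2 v3 (by simp) (by simp) (by simp) h12 h13 h23 h1 h3.1 h3.2
    · push_neg at h1
      by_cases h2 : v2 = x ∨ v2 = y
      · by_cases h3 : v3 = x ∨ v3 = y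
        · have a1 : v1 ≠ x := by rintro rfl; rcases h2 with h2|h2 <;> rcases h3 with h3|h3 <;> simp_all
          have a2 : v1 ≠ y := by rintro rfl; rcases h2 with h2|h2 <;> rcases h3 with h3|h3 <;> simp_all
          exact key v2 v3 v1 (by simp) (by simp) (by simp) h23 h12.symm h13.symm h2 a1 a2
        · push_neg at h3
          exact key v2 v1 v3 (by simp) (by simp) (by simp) h12.symm h23 h13 h2 h3.1 h3.2
      · push_neg at h2
        by_cases h3 : v3 = x ∨ v3 = y
        · exact key v3 v1 v2 (by simp) (by simp) (by simp) h13.symm h23.symm h12 h3 h2.1 h2.2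
        · push_neg at h3
          left
          exact cw_lemB (Finset.mem_insert_of_mem hc) (cw_memSdiff2 hv1 h1.1 h1.2)
            (cw_memSdiff2 hv2 h2.1 h2.2) (cw_memSdiff2 hv3 h3.1 h3.2) h12 h13 h23 ht
  · exact absurd (cw_two_le_card hv1 hv2 h12) (by assumption)
termination_by U.card
decreasing_by all_goals exact card_sdiff_pair_lt hx

/-! ### State machinery -/

inductive GSt | cl | wa | un deriving DecidableEq
inductive GSSt | s0 | sh (o w : Fin 8) | sd deriving DecidableEq
inductive GFSt | f0 | fh (y1 wf : Fin 8) | fd (z1 z2 : Fin 8) deriving DecidableEq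
inductive GISt | pre0 | preA | post (xh yh : Bool) (s : GSSt) (f : GFSt) deriving DecidableEq

def mS (xh : Bool) : Fin 8 := if xh then 2 else 1
def nS (xh : Bool) : Fin 8 := if xh then 1 else 2

def sStatus (xh : Bool) : GSSt → Fin 8 → GSt
  | .s0, _ => .un
  | .sh o w, k => if k = o then .cl else if k = w then .wa else .un
  | .sd, k => if k = 0 ∨ k = mS xh then .cl else .wa

def fStatus : GFSt → Fin 8 → GSt
  | .f0, _ => .un
  | .fh y1 wf, k => if k = y1 then .cl else if k = wf then .wa else .un
  | .fd z1 z2, k => if k = z1 ∨ k = z2 then .cl else .wa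

def statusOf : GISt → Fin 8 → GSt
  | .pre0, _ => .un
  | .preA, k => if k = 0 then .cl else if k = 3 then .wa else .un
  | .post xh _ s f, k => if k.val < 4 then sStatus xh s k else fStatus f k

def planP (xh yh : Bool) : Fin 8 × Fin 8 :=
  match xh, yh with
  | false, false => (4, 6)
  | false, true  => (5, 7)
  | true,  false => (4, 5)
  | true,  true  => (6, 7)

def okS (xh : Bool) : GSSt → Prop
  | .s0 => True
  | .sh o w => (o = 0 ∨ o = mS xh) ∧ (w = nS xh ∨ w = 3)
  | .sd => True

def okF (xh yh : Bool) (s : GSSt) : GFSt → Prop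
  | .f0 => s ≠ .s0
  | .fh y1 wf => 4 ≤ y1.val ∧ 4 ≤ wf.val ∧ y1 ≠ wf ∧
      (if yh then (y1 = 7 ∨ wf ≠ 7) else (y1 = 4 ∨ ((y1 = 5 ∨ y1 = 6) ∧ wf ≠ 4))) ∧
      (s = .s0 → (y1 = (planP xh yh).1 ∨ y1 = (planP xh yh).2) ∧
        wf ≠ (planP xh yh).1 ∧ wf ≠ (planP xh yh).2)
  | .fd z1 z2 => 4 ≤ z1.val ∧ 4 ≤ z2.val ∧ z1 ≠ z2 ∧
      (if yh then (z1 = 7 ∨ z2 = 7) else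
        ((z1 = 4 ∧ (z2 = 5 ∨ z2 = 6)) ∨ (z2 = 4 ∧ (z1 = 5 ∨ z1 = 6)))) ∧
      (s = .s0 → ({z1, z2} : Finset (Fin 8)) = {(planP xh yh).1, (planP xh yh).2})

def okSt : GISt → Prop
  | .pre0 => True
  | .preA => True
  | .post xh yh s f => okS xh s ∧ okF xh yh s f

instance (xh : Bool) (s : GSSt) : Decidable (okS xh s) := by
  cases s <;> unfold okS <;> infer_instance
instance (xh yh : Bool) (s : GSSt) (f : GFSt) : Decidable (okF xh yh s f) := by
  cases f <;> unfold okF <;> infer_instance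
instance (s : GISt) : Decidable (okSt s) := by
  cases s <;> unfold okSt <;> infer_instance

def GInv {n : ℕ} (U C : Finset (GVert n)) (R : Finset (Fin n)) (X Y : Fin n → Bool)
    (st : Fin n → GISt) : Prop :=
  (∀ i k, ((i, k) ∈ U ↔ statusOf (st i) k = .un) ∧ ((i, k) ∈ C ↔ statusOf (st i) k = .cl)) ∧
  (∀ i, okSt (st i)) ∧
  (∀ i, (st i = .pre0 ∨ st i = .preA) ↔ i ∈ R) ∧
  (∀ i xh yh s f, st i = .post xh yh s f → X i = xh ∧ Y i = yh)

/-! ### membership helpers -/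

section helpers
variable {n : ℕ} {U C : Finset (GVert n)} {R : Finset (Fin n)} {X Y : Fin n → Bool}
  {st : Fin n → GISt}

lemma GInv.memU (h : GInv U C R X Y st) {i : Fin n} {k : Fin 8}
    (hk : statusOf (st i) k = .un) : (i, k) ∈ U := (h.1 i k).1.mpr hk

lemma GInv.memC (h : GInv U C R X Y st) {i : Fin n} {k : Fin 8}
    (hk : statusOf (st i) k = .cl) : (i, k) ∈ C := (h.1 i k).2.mpr hk

lemma GInv.statusU (h : GInv U C R X Y st) {i : Fin n} {k : Fin 8}
    (hk : (i, k) ∈ U) : statusOf (st i) k = .un := (h.1 i k).1.mp hk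

/-- The key invariant-update lemma. -/
lemma GInv.step (h : GInv U C R X Y st) {i : Fin n} {j j' : Fin 8} (hjj' : j ≠ j')
    (hju : statusOf (st i) j = .un) (hj'u : statusOf (st i) j' = .un)
    (tk : Bool) {st' : Fin n → GISt} {R' : Finset (Fin n)} {X' Y' : Fin n → Bool}
    (hsame : ∀ i', i' ≠ i → st' i' = st i')
    (hnew : ∀ k : Fin 8, statusOf (st' i) k =
      if k = j then (if tk then .cl else .wa) else if k = j' then (if tk then .wa else .cl)
      else statusOf (st i) k)
    (hok : okSt (st' i))
    (hpre : (st' i = .pre0 ∨ st' i = .preA) ↔ i ∈ R')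
    (hpost : ∀ xh yh s f, st' i = .post xh yh s f → X' i = xh ∧ Y' i = yh)
    (hRo : ∀ i', i' ≠ i → (i' ∈ R' ↔ i' ∈ R))
    (hXo : ∀ i', i' ≠ i → X' i' = X i') (hYo : ∀ i', i' ≠ i → Y' i' = Y i') :
    GInv (U \ {(i, j), (i, j')}) (insert (if tk then (i, j) else (i, j')) C) R' X' Y' st' := by
  obtain ⟨hstat, hok0, hpre0, hpost0⟩ := h
  refine ⟨?_, ?_, ?_, ?_⟩
  · intro i' k
    by_cases hi : i' = i
    · subst hi
      have hU := (hstat i' k).1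
      have hC := (hstat i' k).2
      constructor
      · rw [Finset.mem_sdiff, hnew k]
        by_cases hkj : k = j
        · subst hkj
          simp only [Finset.mem_insert, Finset.mem_singleton, if_pos rfl]
          cases tk <;> simp
        by_cases hkj' : k = j'
        · subst hkj'
          simp only [Finset.mem_insert, Finset.mem_singleton, if_neg hkj, if_pos rfl]
          cases tk <;> simp
        · have hnm : ¬((i', k) = (i', j) ∨ (i', k) = (i', j')) := by
            rintro (hh | hh)
            · exact hkj (congrArg Prod.snd hh)
            · exact hkj' (congrArg Prod.snd hh)
          simp only [if_neg hkj, if_neg hkj', Finset.mem_insert, Finset.mem_singleton]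
          rw [← hU]
          tauto
      · rw [Finset.mem_insert, hnew k]
        have hjC : (i', j) ∉ C := fun hh =>
          absurd ((hstat i' j).2.mp hh) (by rw [hju]; decide)
        have hj'C : (i', j') ∉ C := fun hh =>
          absurd ((hstat i' j').2.mp hh) (by rw [hj'u]; decide)
        by_cases hkj : k = j
        · subst hkj
          simp only [if_pos rfl]
          cases tk with
          | true => simp
          | false =>
            simp only [if_neg (by decide : ¬ (false = true))]
            constructor
            · rintro (hh | hh)
              · exact absurd (congrArg Prod.snd hh) hjj'
              · exact absurd hh hjC
            · intro hh; cases hh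
        by_cases hkj' : k = j'
        · subst hkj'
          simp only [if_neg hkj, if_pos rfl]
          cases tk with
          | false => simp
          | true =>
            simp only [if_neg (by decide : ¬ (true = false))]
            constructor
            · rintro (hh | hh)
              · exact absurd (congrArg Prod.snd hh).symm hjj'
              · exact absurd hh hj'C
            · intro hh; cases hh
        · simp only [if_neg hkj, if_neg hkj']
          rw [← hC]
          constructor
          · rintro (hh | hh)
            · cases tk with
              | true => exact absurd (congrArg Prod.snd hh) hkj
              | false => exact absurd (congrArg Prod.snd hh) hkj'
            · exact hh
          · intro hh; exact Or.inr hh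
    · have hst : st' i' = st i' := hsame i' hi
      have hU := (hstat i' k).1
      have hC := (hstat i' k).2
      have hne1 : (i', k) ≠ (i, j) := fun hh => hi (congrArg Prod.fst hh)
      have hne2 : (i', k) ≠ (i, j') := fun hh => hi (congrArg Prod.fst hh)
      constructor
      · rw [Finset.mem_sdiff, hst]
        simp only [Finset.mem_insert, Finset.mem_singleton]
        rw [← hU]
        tauto
      · rw [Finset.mem_insert, hst, ← hC]
        constructor
        · rintro (hh | hh)
          · cases tk with
            | true => exact absurd hh hne1
            | false => exact absurd hh hne2
          · exact hh
        · intro hh; exact Or.inr hh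
  · intro i'
    by_cases hi : i' = i
    · subst hi; exact hok
    · rw [hsame i' hi]; exact hok0 i'
  · intro i'
    by_cases hi : i' = i
    · subst hi; exact hpre
    · rw [hsame i' hi, hRo i' hi]; exact hpre0 i'
  · intro i' xh yh s f hf
    by_cases hi : i' = i
    · subst hi; exact hpost _ _ _ _ hf
    · rw [hsame i' hi] at hf
      rw [hXo i' hi, hYo i' hi]
      exact hpost0 i' _ _ _ _ hf

end helpers

/-! ### Edge membership helpers -/

section edges
variable {n : ℕ} {φ : CNF3 (Fin n ⊕ Fin n)}

lemma mem_SBlock {i : Fin n} {k : Fin 8} (h : k.val < 4) : (i, k) ∈ SBlock i := by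
  fin_cases k <;> simp_all [SBlock, vs0, vsT, vsF, vs1]

lemma mem_FBlock {i : Fin n} {k : Fin 8} (h : 4 ≤ k.val) : (i, k) ∈ FBlock i := by
  fin_cases k <;> simp_all [FBlock, vf0, vfT, vfT', vfF]

lemma pairNe {i : Fin n} {k k' : Fin 8} (h : k ≠ k') : (i, k) ≠ (i, k') :=
  fun hh => h (congrArg Prod.snd hh)

lemma blockTriple {i : Fin n} {k1 k2 k3 : Fin 8}
    (hside : (k1.val < 4 ∧ k2.val < 4 ∧ k3.val < 4) ∨ (4 ≤ k1.val ∧ 4 ≤ k2.val ∧ 4 ≤ k3.val))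
    (d12 : k1 ≠ k2) (d13 : k1 ≠ k3) (d23 : k2 ≠ k3) :
    ({(i, k1), (i, k2), (i, k3)} : Finset (GVert n)) ∈ gadgetEdges n φ := by
  refine Or.inl (Or.inl ⟨i, ?_, ?_⟩)
  · exact Finset.card_eq_three.mpr ⟨_, _, _, pairNe d12, pairNe d13, pairNe d23, rfl⟩
  · rcases hside with ⟨h1, h2, h3⟩ | ⟨h1, h2, h3⟩
    · refine Or.inl ?_
      intro a ha
      simp only [Finset.mem_insert, Finset.mem_singleton] at ha
      rcases ha with rfl | rfl | rfl
      exacts [mem_SBlock h1, mem_SBlock h2, mem_SBlock h3]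
    · refine Or.inr ?_
      intro a ha
      simp only [Finset.mem_insert, Finset.mem_singleton] at ha
      rcases ha with rfl | rfl | rfl
      exacts [mem_FBlock h1, mem_FBlock h2, mem_FBlock h3]

/-- the punish edge associated to `(xh, yh)`:
`Sx ∪ planP` where `Sx = {s0, nS xh}` is the indicator of `¬xh`. -/
def punishE (i : Fin n) (xh yh : Bool) : Finset (GVert n) :=
  {(i, 0), (i, nS xh), (i, (planP xh yh).1), (i, (planP xh yh).2)}

lemma punishE_mem (i : Fin n) (xh yh : Bool) : punishE i xh yh ∈ gadgetEdges n φ := by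
  refine Or.inl (Or.inr ⟨i, ?_⟩)
  cases xh <;> cases yh <;> simp only [punishE, planP, nS]
  · exact Or.inr (Or.inr (Or.inr (by ext a; simp [vs0, vsF, vf0, vfT']; try tauto)))
  · exact Or.inr (Or.inl (by ext a; simp [vs0, vfF, vfT, vsF]; try tauto))
  · exact Or.inl (by ext a; simp [vs0, vsT, vf0, vfT]; try tauto)
  · exact Or.inr (Or.inr (Or.inl (by ext a; simp [vs0, vfF, vsT, vfT']; try tauto)))

end edges

/-! ### Advancing the invariant / winning wrappers -/

section adv
variable {n : ℕ} {φ : CNF3 (Fin n ⊕ Fin n)}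

/-- Satisfier's winning predicate. -/
def PSPred (φ : CNF3 (Fin n ⊕ Fin n)) : (Fin n → Bool) → (Fin n → Bool) → Prop :=
  fun X Y => evalCNF (Sum.elim X Y) φ

/-- The goal after Waiter offers `x, y`. -/
def CWGoal (φ : CNF3 (Fin n ⊕ Fin n)) (U C : Finset (GVert n)) (x y : GVert n) : Prop :=
  CWClientWins (gadgetEdges n φ) (U \ {x, y}) (insert x C) ∨
    CWClientWins (gadgetEdges n φ) (U \ {x, y}) (insert y C)

/-- The induction hypothesis for positions with fewer unclaimed vertices. -/
def IHyp (φ : CNF3 (Fin n ⊕ Fin n)) (U : Finset (GVert n)) : Prop :=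
  ∀ (U' C' : Finset (GVert n)) (R' : Finset (Fin n)) (X' Y' : Fin n → Bool)
    (st' : Fin n → GISt), U'.card < U.card → GInv U' C' R' X' Y' st' →
    PSFalsWins (PSPred φ) R' X' Y' → CWClientWins (gadgetEdges n φ) U' C'

lemma vOr {x y v : GVert n} {i : Fin n} {j j' : Fin 8}
    (hxy : ({x, y} : Finset (GVert n)) = {(i, j), (i, j')})
    (hv : v = (i, j) ∨ v = (i, j')) : v = x ∨ v = y := by
  have hm : v ∈ ({x, y} : Finset (GVert n)) := by
    rw [hxy]; simp only [Finset.mem_insert, Finset.mem_singleton]; exact hv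
  simpa using hm

lemma sdiff_pair_eq {U : Finset (GVert n)} {x y : GVert n} {i : Fin n} {j j' : Fin 8}
    (hxy : ({x, y} : Finset (GVert n)) = {(i, j), (i, j')}) :
    U \ {x, y} = U \ {(i, j), (i, j')} := by rw [hxy]

lemma goal_of_take {U C : Finset (GVert n)} {x y : GVert n} {i : Fin n} {j j' : Fin 8}
    (hxy : ({x, y} : Finset (GVert n)) = {(i, j), (i, j')}) (v : GVert n)
    (hv : v = (i, j) ∨ v = (i, j'))
    (h : CWClientWins (gadgetEdges n φ) (U \ {(i, j), (i, j')}) (insert v C)) :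
    CWGoal φ U C x y := by
  unfold CWGoal
  rw [sdiff_pair_eq hxy]
  exact cw_takeStep v (vOr hxy hv) h

/-- advance the invariant by one (same-index) move and use the induction hypothesis -/
lemma advance {U C : Finset (GVert n)} {R : Finset (Fin n)} {X Y : Fin n → Bool}
    {st : Fin n → GISt} (hInv : GInv U C R X Y st) {x y : GVert n} {i : Fin n} {j j' : Fin 8}
    (hxy : ({x, y} : Finset (GVert n)) = {(i, j), (i, j')}) (hjj' : j ≠ j')
    (hju : statusOf (st i) j = .un) (hj'u : statusOf (st i) j' = .un)
    (tk : Bool) (si' : GISt) (R' : Finset (Fin n)) (X' Y' : Fin n → Bool)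
    (hnew : ∀ k : Fin 8, statusOf si' k =
      if k = j then (if tk then .cl else .wa) else if k = j' then (if tk then .wa else .cl)
      else statusOf (st i) k)
    (hok : okSt si')
    (hpre : (si' = .pre0 ∨ si' = .preA) ↔ i ∈ R')
    (hpost : ∀ xh yh s f, si' = .post xh yh s f → X' i = xh ∧ Y' i = yh)
    (hRo : ∀ i', i' ≠ i → (i' ∈ R' ↔ i' ∈ R))
    (hXo : ∀ i', i' ≠ i → X' i' = X i') (hYo : ∀ i', i' ≠ i → Y' i' = Y i')
    (hPS' : PSFalsWins (PSPred φ) R' X' Y')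
    (ih : IHyp φ U) :
    CWGoal φ U C x y := by
  refine goal_of_take hxy (if tk then (i, j) else (i, j')) ?_ ?_
  · cases tk <;> simp
  · set st' : Fin n → GISt := Function.update st i si' with hst'
    have hsame : ∀ i', i' ≠ i → st' i' = st i' := fun i' hi' => Function.update_of_ne hi' _ _
    have hsti : st' i = si' := Function.update_self _ _ _
    refine ih _ _ R' X' Y' st' (card_sdiff_pair_lt (hInv.memU hju)) ?_ hPS'
    have := hInv.step hjj' hju hj'u tk hsame (hsti ▸ hnew) (hsti ▸ hok) (hsti ▸ hpre)
      (fun xh yh s f hf => hpost xh yh s f (hsti ▸ hf)) hRo hXo hYo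
    exact this

end adv

/-! ### status computation helpers -/

section stathelp

lemma statusPost_S {xh yh : Bool} {s : GSSt} {f : GFSt} {z : Fin 8} (h : z.val < 4) :
    statusOf (.post xh yh s f) z = sStatus xh s z := by simp [statusOf, h]

lemma statusPost_F {xh yh : Bool} {s : GSSt} {f : GFSt} {z : Fin 8} (h : ¬ z.val < 4) :
    statusOf (.post xh yh s f) z = fStatus f z := by simp [statusOf, h]

lemma statusPreA_un {z : Fin 8} (h : 4 ≤ z.val) : statusOf .preA z = .un := by
  fin_cases z <;> simp_all [statusOf]

lemma sStatus_sd_ne_un {xh : Bool} {j : Fin 8} : sStatus xh .sd j ≠ .un := by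
  cases xh <;> fin_cases j <;> decide

lemma fStatus_fd_ne_un {z1 z2 j : Fin 8} : fStatus (.fd z1 z2) j ≠ .un := by
  show (if j = z1 ∨ j = z2 then GSt.cl else GSt.wa) ≠ .un
  split_ifs <;> decide

lemma okS_sh_dat {xh : Bool} {o w : Fin 8} (h : okS xh (.sh o w)) :
    o.val < 4 ∧ w.val < 4 ∧ o ≠ w := by
  obtain ⟨h1 | h1, h2 | h2⟩ := h <;> subst h1 <;> subst h2 <;> cases xh <;>
    simp_all [mS, nS] <;> decide

lemma okF_fh_dat {xh yh : Bool} {s : GSSt} {y1 wf : Fin 8} (h : okF xh yh s (.fh y1 wf)) :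
    4 ≤ y1.val ∧ 4 ≤ wf.val ∧ y1 ≠ wf := ⟨h.1, h.2.1, h.2.2.1⟩

lemma okF_fd_dat {xh yh : Bool} {s : GSSt} {z1 z2 : Fin 8} (h : okF xh yh s (.fd z1 z2)) :
    4 ≤ z1.val ∧ 4 ≤ z2.val ∧ z1 ≠ z2 := ⟨h.1, h.2.1, h.2.2.1⟩

end stathelp

/-! ### Cross-block offers: Client wins -/

section cross
variable {n : ℕ} {φ : CNF3 (Fin n ⊕ Fin n)}

lemma triple_ht {i : Fin n} {j z1 z2 z3 : Fin 8}
    (h1 : z1.val < 4 ↔ j.val < 4) (h2 : z2.val < 4 ↔ j.val < 4) (h3 : z3.val < 4 ↔ j.val < 4)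
    (d1 : j ≠ z1) (d2 : j ≠ z2) (d3 : j ≠ z3)
    (d12 : z1 ≠ z2) (d13 : z1 ≠ z3) (d23 : z2 ≠ z3) :
    ∀ a b : GVert n, a ∈ ({(i, z1), (i, z2), (i, z3)} : Finset (GVert n)) →
      b ∈ ({(i, z1), (i, z2), (i, z3)} : Finset (GVert n)) → a ≠ b →
      {(i, j), a, b} ∈ gadgetEdges n φ := by
  have side : ∀ u v : Fin 8, (u.val < 4 ↔ j.val < 4) → (v.val < 4 ↔ j.val < 4) → j ≠ u →
      j ≠ v → u ≠ v → ({(i, j), (i, u), (i, v)} : Finset (GVert n)) ∈ gadgetEdges n φ := by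
    intro u v hu hv dju djv duv
    refine blockTriple ?_ dju djv duv
    by_cases hj4 : j.val < 4
    · exact Or.inl ⟨hj4, hu.mpr hj4, hv.mpr hj4⟩
    · exact Or.inr ⟨Nat.le_of_not_lt hj4, Nat.le_of_not_lt fun h => hj4 (hu.mp h),
        Nat.le_of_not_lt fun h => hj4 (hv.mp h)⟩
  intro a b ha hb hab
  simp only [Finset.mem_insert, Finset.mem_singleton] at ha hb
  rcases ha with rfl | rfl | rfl <;> rcases hb with rfl | rfl | rfl
  · exact absurd rfl hab
  · exact side _ _ h1 h2 d1 d2 d12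
  · exact side _ _ h1 h3 d1 d3 d13
  · exact side _ _ h2 h1 d2 d1 d12.symm
  · exact absurd rfl hab
  · exact side _ _ h2 h3 d2 d3 d23
  · exact side _ _ h3 h1 d3 d1 d13.symm
  · exact side _ _ h3 h2 d3 d2 d23.symm
  · exact absurd rfl hab

lemma others3 : ∀ j : Fin 8, ∃ z1 z2 z3 : Fin 8,
    (z1.val < 4 ↔ j.val < 4) ∧ (z2.val < 4 ↔ j.val < 4) ∧ (z3.val < 4 ↔ j.val < 4) ∧
    z1 ≠ z2 ∧ z1 ≠ z3 ∧ z2 ≠ z3 ∧ z1 ≠ j ∧ z2 ≠ j ∧ z3 ≠ j := by decide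

lemma existsS4 : ∀ o w j : Fin 8, o.val < 4 → w.val < 4 → j.val < 4 → o ≠ w → j ≠ o → j ≠ w →
    ∃ z : Fin 8, z.val < 4 ∧ z ≠ o ∧ z ≠ w ∧ z ≠ j := by decide

lemma existsF4 : ∀ y1 wf j : Fin 8, 4 ≤ y1.val → 4 ≤ wf.val → 4 ≤ j.val → y1 ≠ wf → j ≠ y1 →
    j ≠ wf → ∃ z : Fin 8, 4 ≤ z.val ∧ z ≠ y1 ∧ z ≠ wf ∧ z ≠ j := by decide

lemma crossWin {U C : Finset (GVert n)} {R : Finset (Fin n)} {X Y : Fin n → Bool}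
    {st : Fin n → GISt} (hInv : GInv U C R X Y st) {x y : GVert n}
    (hx : x ∈ U) (hne : x ≠ y)
    (hblk : x.1 ≠ y.1 ∨ ¬(x.2.val < 4 ↔ y.2.val < 4)) :
    CWGoal φ U C x y := by
  obtain ⟨i, j⟩ := x
  have hju : statusOf (st i) j = .un := hInv.statusU hx
  have hyne : ∀ z : Fin 8, (z.val < 4 ↔ j.val < 4) → (i, z) ≠ y := by
    rintro z hzs rfl
    rcases hblk with h | h
    · exact h rfl
    · exact h hzs.symm
  have hmem : ∀ z : Fin 8, statusOf (st i) z = .un → z ≠ j → (z.val < 4 ↔ j.val < 4) →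
      (i, z) ∈ U \ {(i, j), y} :=
    fun z hz hzj hzs => cw_memSdiff2 (hInv.memU hz) (pairNe hzj) (hyne z hzs)
  -- Client takes x = (i, j)
  refine Or.inl ?_
  -- fresh-block case handler
  have freshCase : (∀ z : Fin 8, (z.val < 4 ↔ j.val < 4) → statusOf (st i) z = .un) →
      CWClientWins (gadgetEdges n φ) (U \ {(i, j), y}) (insert (i, j) C) := by
    intro hall
    obtain ⟨z1, z2, z3, s1, s2, s3, d12, d13, d23, dj1, dj2, dj3⟩ := others3 j
    exact cw_lemB (Finset.mem_insert_self _ _) (hmem z1 (hall z1 s1) dj1 s1)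
      (hmem z2 (hall z2 s2) dj2 s2) (hmem z3 (hall z3 s3) dj3 s3)
      (pairNe d12) (pairNe d13) (pairNe d23)
      (triple_ht s1 s2 s3 (Ne.symm dj1) (Ne.symm dj2) (Ne.symm dj3) d12 d13 d23)
  -- half-block case handler : Client owns (i,o), offered j, z is the other unclaimed one
  have halfCase : ∀ o z : Fin 8, statusOf (st i) o = .cl → statusOf (st i) z = .un →
      (z.val < 4 ↔ j.val < 4) → (o.val < 4 ↔ j.val < 4) → o ≠ j → z ≠ j → o ≠ z →
      CWClientWins (gadgetEdges n φ) (U \ {(i, j), y}) (insert (i, j) C) := by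
    intro o z ho hz hzs hos hoj hzj hoz
    refine cw_lemA (e := {(i, o), (i, j), (i, z)}) ?_ (hmem z hz hzj hzs) ?_
    · refine blockTriple ?_ hoj hoz (fun h => hzj h.symm)
      by_cases hj4 : j.val < 4
      · exact Or.inl ⟨hos.mpr hj4, hj4, hzs.mpr hj4⟩
      · exact Or.inr ⟨Nat.le_of_not_lt fun h => hj4 (hos.mp h), Nat.le_of_not_lt hj4,
          Nat.le_of_not_lt fun h => hj4 (hzs.mp h)⟩
    · intro a ha
      simp only [Finset.mem_insert, Finset.mem_singleton] at ha ⊢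
      rcases ha with rfl | rfl | rfl
      · right; right; exact hInv.memC ho
      · right; left; rfl
      · left; rfl
  cases hst : st i with
  | pre0 =>
      refine freshCase fun z _ => by rw [hst]; rfl
  | preA =>
      by_cases hjs : j.val < 4
      · -- j ∈ {1, 2}
        rw [hst] at hju
        have hj12 : j = 1 ∨ j = 2 := by
          fin_cases j
          · exact absurd hju (by decide)
          · exact Or.inl rfl
          · exact Or.inr rfl
          · exact absurd hju (by decide)
          all_goals exact absurd hjs (by decide)
        rcases hj12 with rfl | rfl
        · exact halfCase 0 2 (by rw [hst]; rfl) (by rw [hst]; rfl) (by decide) (by decide)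
            (by decide) (by decide) (by decide)
        · exact halfCase 0 1 (by rw [hst]; rfl) (by rw [hst]; rfl) (by decide) (by decide)
            (by decide) (by decide) (by decide)
      · -- j in the fresh F-block
        refine freshCase fun z hzs => ?_
        rw [hst]
        exact statusPreA_un (Nat.le_of_not_lt fun h => hjs (hzs.mp h))
  | post xh yh s f =>
      by_cases hjs : j.val < 4
      · rw [hst, statusPost_S hjs] at hju
        cases s with
        | s0 =>
            refine freshCase fun z hzs => ?_
            rw [hst, statusPost_S (hzs.mpr hjs)]; rfl
        | sh o w =>
            obtain ⟨ho4, hw4, how⟩ := okS_sh_dat (by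
              have := hInv.2.1 i; rw [hst] at this; exact this.1)
            have hjo : j ≠ o := fun h => by simp [sStatus, h] at hju
            have hjw : j ≠ w := fun h => by
              rw [show sStatus xh (.sh o w) j = .wa from by
                simp [sStatus, h, (Ne.symm how : w ≠ o)]] at hju
              exact absurd hju (by decide)
            obtain ⟨z, hz4, hzo, hzw, hzj⟩ := existsS4 o w j ho4 hw4 hjs how hjo hjw
            refine halfCase o z ?_ ?_ (by omega) (by omega) (Ne.symm hjo) hzj
              (fun h => hzo h.symm)
            · rw [hst, statusPost_S ho4]; simp [sStatus]
            · rw [hst, statusPost_S hz4]; simp [sStatus, hzo, hzw]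
        | sd => exact absurd hju sStatus_sd_ne_un
      · rw [hst, statusPost_F hjs] at hju
        cases f with
        | f0 =>
            refine freshCase fun z hzs => ?_
            rw [hst, statusPost_F (fun h => hjs (hzs.mp h))]; rfl
        | fh y1 wf =>
            have hokk := hInv.2.1 i
            rw [hst] at hokk
            obtain ⟨hy14, hwf4, hywf⟩ := okF_fh_dat hokk.2
            have hjy : j ≠ y1 := fun h => by simp [fStatus, h] at hju
            have hjwf : j ≠ wf := fun h => by
              rw [show fStatus (.fh y1 wf) j = .wa from by
                simp [fStatus, h, (Ne.symm hywf : wf ≠ y1)]] at hju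
              exact absurd hju (by decide)
            obtain ⟨z, hz4, hzy, hzwf, hzj⟩ := existsF4 y1 wf j hy14 hwf4
              (Nat.le_of_not_lt hjs) hywf hjy hjwf
            refine halfCase y1 z ?_ ?_ (by omega) (by omega) (Ne.symm hjy) hzj
              (fun h => hzy h.symm)
            · rw [hst, statusPost_F (by omega)]; simp [fStatus]
            · rw [hst, statusPost_F (by omega)]; simp [fStatus, hzy, hzwf]
        | fd z1 z2 => exact absurd hju fStatus_fd_ne_un

end cross

/-! ### Endgame: all blocks resolved, some clause is falsified -/

section base
variable {n : ℕ} {φ : CNF3 (Fin n ⊕ Fin n)}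

lemma PSF_empty {I : Type*} [DecidableEq I] {φp : (I → Bool) → (I → Bool) → Prop}
    {X Y : I → Bool} (h : PSFalsWins φp (∅ : Finset I) X Y) : ¬ φp X Y := by
  rw [PSFalsWins] at h
  simpa using h

lemma twoUnS : ∀ o w : Fin 8, o.val < 4 → w.val < 4 → o ≠ w →
    ∃ p : Fin 8 × Fin 8, p.1.val < 4 ∧ p.2.val < 4 ∧ p.1 ≠ p.2 ∧ p.1 ≠ o ∧ p.1 ≠ w ∧
      p.2 ≠ o ∧ p.2 ≠ w := by
  decide

lemma twoUnF : ∀ o w : Fin 8, 4 ≤ o.val → 4 ≤ w.val → o ≠ w →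
    ∃ p : Fin 8 × Fin 8, 4 ≤ p.1.val ∧ 4 ≤ p.2.val ∧ p.1 ≠ p.2 ∧ p.1 ≠ o ∧ p.1 ≠ w ∧
      p.2 ≠ o ∧ p.2 ≠ w := by
  decide

lemma baseWin {U C : Finset (GVert n)} {R : Finset (Fin n)} {X Y : Fin n → Bool}
    {st : Fin n → GISt} (hInv : GInv U C R X Y st)
    (hPS : PSFalsWins (PSPred φ) R X Y) (hcard : ¬ 2 ≤ U.card) :
    ∃ e ∈ gadgetEdges n φ, e ⊆ C ∪ U := by
  have two : ∀ (i : Fin n) (k k' : Fin 8), k ≠ k' → statusOf (st i) k = .un →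
      statusOf (st i) k' = .un → False := fun i k k' hne h1 h2 =>
    hcard (cw_two_le_card (hInv.memU h1) (hInv.memU h2) (pairNe hne))
  have hdone : ∀ i, ∃ xh yh z1 z2, st i = .post xh yh .sd (.fd z1 z2) := by
    intro i
    have hok := hInv.2.1 i
    cases hst : st i with
    | pre0 => exact absurd (two i 0 1 (by decide) (by rw [hst]; rfl) (by rw [hst]; rfl)) id
    | preA => exact absurd (two i 1 2 (by decide) (by rw [hst]; rfl) (by rw [hst]; rfl)) id
    | post xh yh s f =>
        rw [hst] at hok
        cases s with
        | s0 => exact absurd (two i 0 1 (by decide) (by rw [hst, statusPost_S (by decide)]; rfl)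
            (by rw [hst, statusPost_S (by decide)]; rfl)) id
        | sh o w =>
            obtain ⟨ho4, hw4, how⟩ := okS_sh_dat hok.1
            obtain ⟨p, hz4, hz'4, hzz', hzo, hzw, hz'o, hz'w⟩ := twoUnS o w ho4 hw4 how
            refine absurd (two i p.1 p.2 hzz' ?_ ?_) id
            · rw [hst, statusPost_S hz4]; simp [sStatus, hzo, hzw]
            · rw [hst, statusPost_S hz'4]; simp [sStatus, hz'o, hz'w]
        | sd =>
          cases f with
          | f0 => exact absurd (two i 4 5 (by decide)
              (by rw [hst, statusPost_F (by decide)]; rfl)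
              (by rw [hst, statusPost_F (by decide)]; rfl)) id
          | fh y1 wf =>
              obtain ⟨hy4, hw4, hyw⟩ := okF_fh_dat hok.2
              obtain ⟨p, hz4, hz'4, hzz', hzo, hzw, hz'o, hz'w⟩ := twoUnF y1 wf hy4 hw4 hyw
              refine absurd (two i p.1 p.2 hzz' ?_ ?_) id
              · rw [hst, statusPost_F (by omega)]; simp [fStatus, hzo, hzw]
              · rw [hst, statusPost_F (by omega)]; simp [fStatus, hz'o, hz'w]
          | fd z1 z2 => exact ⟨xh, yh, z1, z2, rfl⟩
  have hR : R = ∅ := by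
    refine Finset.eq_empty_iff_forall_notMem.mpr fun i hi => ?_
    obtain ⟨xh, yh, z1, z2, hst⟩ := hdone i
    have := (hInv.2.2.1 i).mpr hi
    rw [hst] at this
    rcases this with h | h <;> cases h
  rw [hR] at hPS
  have hnp : ¬ PSPred φ X Y := PSF_empty hPS
  unfold PSPred evalCNF at hnp
  push_neg at hnp
  obtain ⟨c, hc, hnc⟩ := hnp
  unfold evalClause at hnc
  push_neg at hnc
  obtain ⟨hl1, hl2, hl3⟩ := hnc
  -- for each falsified literal, Client owns a witnessing set
  have litWin : ∀ l : Lit (Fin n ⊕ Fin n), ¬ evalLit (Sum.elim X Y) l →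
      ∃ h ∈ litSets l, h ⊆ C := by
    rintro ⟨v, pol⟩ hl
    cases v with
    | inl i =>
        obtain ⟨xh, yh, z1, z2, hst⟩ := hdone i
        have hXi : X i = xh := ((hInv.2.2.2 i xh yh _ _ hst).1)
        have hXv : X i = !pol := by
          simp only [evalLit, Sum.elim_inl] at hl
          cases pol <;> cases hXY : X i <;> simp_all
        have hxh : xh = !pol := hXi.symm.trans hXv
        have hC : ∀ k : Fin 8, k.val < 4 → (k = 0 ∨ k = mS xh) → (i, k) ∈ C := by
          intro k hk4 hk
          refine hInv.memC ?_
          rw [hst, statusPost_S hk4]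
          simp [sStatus, hk]
        cases pol with
        | true =>
            refine ⟨{vs0 i, vsT i}, by simp [litSets], ?_⟩
            intro a ha
            simp only [Finset.mem_insert, Finset.mem_singleton] at ha
            have hxh' : xh = false := by simpa using hxh
            rcases ha with rfl | rfl
            · exact hC 0 (by decide) (Or.inl rfl)
            · exact hC 1 (by decide) (Or.inr (by rw [hxh']; rfl))
        | false =>
            refine ⟨{vs0 i, vsF i}, by simp [litSets], ?_⟩
            intro a ha
            simp only [Finset.mem_insert, Finset.mem_singleton] at ha
            have hxh' : xh = true := by simpa using hxh
            rcases ha with rfl | rfl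
            · exact hC 0 (by decide) (Or.inl rfl)
            · exact hC 2 (by decide) (Or.inr (by rw [hxh']; rfl))
    | inr i =>
        obtain ⟨xh, yh, z1, z2, hst⟩ := hdone i
        have hYi : Y i = yh := ((hInv.2.2.2 i xh yh _ _ hst).2)
        have hYv : Y i = !pol := by
          simp only [evalLit, Sum.elim_inr] at hl
          cases pol <;> cases hXY : Y i <;> simp_all
        have hyh : yh = !pol := hYi.symm.trans hYv
        have hok := hInv.2.1 i
        rw [hst] at hok
        have hfd := hok.2
        have hC : ∀ k : Fin 8, 4 ≤ k.val → (k = z1 ∨ k = z2) → (i, k) ∈ C := by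
          intro k hk4 hk
          refine hInv.memC ?_
          rw [hst, statusPost_F (by omega)]
          simp [fStatus, hk]
        cases pol with
        | true =>
            -- y = false : Client owns {f0, fT} or {f0, fT'}
            have hyh' : yh = false := by simpa using hyh
            rw [hyh'] at hfd
            have hz : (z1 = 4 ∧ (z2 = 5 ∨ z2 = 6)) ∨ (z2 = 4 ∧ (z1 = 5 ∨ z1 = 6)) := by
              have := hfd.2.2.2.1
              simpa using this
            have hz45 : ((i,(4:Fin 8)) ∈ C ∧ (i,(5:Fin 8)) ∈ C) ∨
                ((i,(4:Fin 8)) ∈ C ∧ (i,(6:Fin 8)) ∈ C) := by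
              rcases hz with ⟨h4, h5 | h6⟩ | ⟨h4, h5 | h6⟩
              · exact Or.inl ⟨hC 4 (by decide) (Or.inl h4.symm),
                  hC 5 (by decide) (Or.inr h5.symm)⟩
              · exact Or.inr ⟨hC 4 (by decide) (Or.inl h4.symm),
                  hC 6 (by decide) (Or.inr h6.symm)⟩
              · exact Or.inl ⟨hC 4 (by decide) (Or.inr h4.symm),
                  hC 5 (by decide) (Or.inl h5.symm)⟩
              · exact Or.inr ⟨hC 4 (by decide) (Or.inr h4.symm),
                  hC 6 (by decide) (Or.inl h6.symm)⟩
            rcases hz45 with ⟨h4, h5⟩ | ⟨h4, h6⟩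
            · refine ⟨{vf0 i, vfT i}, by simp [litSets], ?_⟩
              intro a ha
              simp only [Finset.mem_insert, Finset.mem_singleton] at ha
              rcases ha with rfl | rfl
              exacts [h4, h5]
            · refine ⟨{vf0 i, vfT' i}, by simp [litSets], ?_⟩
              intro a ha
              simp only [Finset.mem_insert, Finset.mem_singleton] at ha
              rcases ha with rfl | rfl
              exacts [h4, h6]
        | false =>
            -- y = true : Client owns {fF}
            have hyh' : yh = true := by simpa using hyh
            rw [hyh'] at hfd
            have h7 : z1 = 7 ∨ z2 = 7 := by
              have := hfd.2.2.2.1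
              simpa using this
            refine ⟨{vfF i}, by simp [litSets], ?_⟩
            intro a ha
            simp only [Finset.mem_singleton] at ha
            subst ha
            rcases h7 with h | h
            · exact hC 7 (by decide) (Or.inl h.symm)
            · exact hC 7 (by decide) (Or.inr h.symm)
  obtain ⟨h1, hm1, hs1⟩ := litWin c.1 hl1
  obtain ⟨h2, hm2, hs2⟩ := litWin c.2.1 hl2
  obtain ⟨h3, hm3, hs3⟩ := litWin c.2.2 hl3
  refine ⟨h1 ∪ h2 ∪ h3, Or.inr ⟨c, hc, h1, hm1, h2, hm2, h3, hm3, rfl⟩, ?_⟩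
  refine (Finset.union_subset (Finset.union_subset hs1 hs2) hs3).trans Finset.subset_union_left

end base

/-! ### Decidable transition facts -/

section dec

lemma statU_sh' : ∀ (xh : Bool) (o w j : Fin 8), sStatus xh (.sh o w) j = .un →
    j ≠ o ∧ j ≠ w := by decide

lemma statU_fh' : ∀ (y1 wf j : Fin 8), fStatus (.fh y1 wf) j = .un → j ≠ y1 ∧ j ≠ wf := by
  decide

lemma okF_weaken {xh yh : Bool} {s s' : GSSt} {f : GFSt} (h : okF xh yh s f)
    (hs' : s' ≠ .s0) : okF xh yh s' f := by
  cases f with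
  | f0 => exact hs'
  | fh y1 wf => exact ⟨h.1, h.2.1, h.2.2.1, h.2.2.2.1, fun hc => absurd hc hs'⟩
  | fd z1 z2 => exact ⟨h.1, h.2.1, h.2.2.1, h.2.2.2.1, fun hc => absurd hc hs'⟩

lemma pairLift {n : ℕ} (i : Fin n) {a b c d : Fin 8} (h : ({a, b} : Finset (Fin 8)) = {c, d}) :
    ({(i, a), (i, b)} : Finset (GVert n)) = {(i, c), (i, d)} := by
  have key : ∀ z : Fin 8, (z = a ∨ z = b) ↔ (z = c ∨ z = d) := by
    intro z
    have h1 : z ∈ ({a, b} : Finset (Fin 8)) ↔ z ∈ ({c, d} : Finset (Fin 8)) := by rw [h]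
    simpa using h1
  ext ⟨i', k⟩
  simp only [Finset.mem_insert, Finset.mem_singleton, Prod.mk.injEq]
  constructor
  · rintro (⟨rfl, h2⟩ | ⟨rfl, h2⟩)
    · rcases (key k).mp (Or.inl h2) with h3 | h3
      · exact Or.inl ⟨rfl, h3⟩
      · exact Or.inr ⟨rfl, h3⟩
    · rcases (key k).mp (Or.inr h2) with h3 | h3
      · exact Or.inl ⟨rfl, h3⟩
      · exact Or.inr ⟨rfl, h3⟩
  · rintro (⟨rfl, h2⟩ | ⟨rfl, h2⟩)
    · rcases (key k).mpr (Or.inl h2) with h3 | h3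
      · exact Or.inl ⟨rfl, h3⟩
      · exact Or.inr ⟨rfl, h3⟩
    · rcases (key k).mpr (Or.inr h2) with h3 | h3
      · exact Or.inl ⟨rfl, h3⟩
      · exact Or.inr ⟨rfl, h3⟩

/-- which value of `x` the Client plans when the F-block is touched first -/
def xhF (j j' : Fin 8) : Bool :=
  if ({j, j'} : Finset (Fin 8)) = {4, 6} ∨ ({j, j'} : Finset (Fin 8)) = {5, 7} then true
  else false

/-- which value of `x` an S-offer commits -/
def xhS (j j' : Fin 8) : Bool :=
  if ({j, j'} : Finset (Fin 8)) = {0, 1} ∨ ({j, j'} : Finset (Fin 8)) = {2, 3} then true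
  else false

lemma sPick : ∀ j j' : Fin 8, j.val < 4 → j'.val < 4 → j ≠ j' →
    ¬(({j, j'} : Finset (Fin 8)) = {0, 3}) →
    ∃ p : Fin 8 × Fin 8, ((p.1 = j ∧ p.2 = j') ∨ (p.1 = j' ∧ p.2 = j)) ∧
      okS (xhS j j') (.sh p.1 p.2) ∧ (p.1 = 0 ∨ p.1 = mS (xhS j j')) := by decide

lemma fPick : ∀ (c : Bool) (j j' : Fin 8), 4 ≤ j.val → 4 ≤ j'.val → j ≠ j' →
    ∃ p : Fin 8 × Fin 8, ((p.1 = j ∧ p.2 = j') ∨ (p.1 = j' ∧ p.2 = j)) ∧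
      okF (xhF j j') c .s0 (.fh p.1 p.2) := by decide

lemma f0Pick : ∀ (xh yh : Bool) (j j' : Fin 8), 4 ≤ j.val → 4 ≤ j'.val → j ≠ j' →
    ∃ p : Fin 8 × Fin 8, ((p.1 = j ∧ p.2 = j') ∨ (p.1 = j' ∧ p.2 = j)) ∧
      okF xh yh .sd (.fh p.1 p.2) := by decide

lemma sMainPick : ∀ (xh : Bool) (j j' : Fin 8), j.val < 4 → j'.val < 4 → j ≠ j' →
    (({j, j'} : Finset (Fin 8)) = {0, nS xh} ∨ ({j, j'} : Finset (Fin 8)) = {mS xh, 3}) →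
    ∃ t : Fin 8, (t = j ∨ t = j') ∧ (t = 0 ∨ t = mS xh) := by decide

lemma shComplete : ∀ (xh : Bool) (o w j j' : Fin 8), okS xh (.sh o w) →
    j.val < 4 → j'.val < 4 → j ≠ j' → j ≠ o → j ≠ w → j' ≠ o → j' ≠ w →
    ∃ t : Fin 8, (t = j ∨ t = j') ∧ ({(0 : Fin 8), mS xh} : Finset (Fin 8)) = {o, t} := by decide

lemma fhCompleteS0 : ∀ (xh yh : Bool) (y1 wf j j' : Fin 8), okF xh yh .s0 (.fh y1 wf) →
    4 ≤ j.val → 4 ≤ j'.val → j ≠ j' → j ≠ y1 → j ≠ wf → j' ≠ y1 → j' ≠ wf →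
    ∃ t : Fin 8, (t = j ∨ t = j') ∧ okF xh yh .s0 (.fd y1 t) := by decide

lemma fhCompleteNS0 : ∀ (xh yh : Bool) (y1 wf j j' : Fin 8), okF xh yh .sd (.fh y1 wf) →
    4 ≤ j.val → 4 ≤ j'.val → j ≠ j' → j ≠ y1 → j ≠ wf → j' ≠ y1 → j' ≠ wf →
    ∃ t : Fin 8, (t = j ∨ t = j') ∧ okF xh yh .sd (.fd y1 t) := by decide

lemma fhPlanData : ∀ (xh yh : Bool) (y1 wf : Fin 8), 4 ≤ y1.val → 4 ≤ wf.val → y1 ≠ wf →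
    (y1 = (planP xh yh).1 ∨ y1 = (planP xh yh).2) → wf ≠ (planP xh yh).1 →
    wf ≠ (planP xh yh).2 →
    ∃ p : Fin 8 × Fin 8, ({(planP xh yh).1, (planP xh yh).2} : Finset (Fin 8)) = {y1, p.1} ∧
      4 ≤ p.1.val ∧ 4 ≤ p.2.val ∧ p.1 ≠ y1 ∧ p.1 ≠ wf ∧ p.2 ≠ y1 ∧ p.2 ≠ wf ∧ p.1 ≠ p.2 := by
  decide

lemma pairElim {a b c d : Fin 8} (h : ({a, b} : Finset (Fin 8)) = {c, d}) :
    (a = c ∨ a = d) ∧ (b = c ∨ b = d) := by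
  constructor
  · have : a ∈ ({c, d} : Finset (Fin 8)) := by rw [← h]; simp
    simpa using this
  · have : b ∈ ({c, d} : Finset (Fin 8)) := by rw [← h]; simp
    simpa using this

lemma neSF {a b : Fin 8} (ha : a.val < 4) (hb : 4 ≤ b.val) : a ≠ b := fun h => by
  subst h; omega

/-! status-update equations (S side, `k < 4`) -/

lemma sStep_fresh1 : ∀ (xh : Bool) (j j' : Fin 8), j.val < 4 → j'.val < 4 → j ≠ j' →
    ∀ k : Fin 8, k.val < 4 → sStatus xh (.sh j j') k =
      if k = j then .cl else if k = j' then .wa else sStatus xh .s0 k := by decide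

lemma sStep_fresh2 : ∀ (xh : Bool) (j j' : Fin 8), j.val < 4 → j'.val < 4 → j ≠ j' →
    ∀ k : Fin 8, k.val < 4 → sStatus xh (.sh j' j) k =
      if k = j then .wa else if k = j' then .cl else sStatus xh .s0 k := by decide

lemma sStep_sd1 : ∀ (xh : Bool) (o w j j' : Fin 8), o.val < 4 → w.val < 4 →
    j.val < 4 → j'.val < 4 → o ≠ w → j ≠ j' → j ≠ o → j ≠ w → j' ≠ o → j' ≠ w →
    ({(0 : Fin 8), mS xh} : Finset (Fin 8)) = {o, j} →
    ∀ k : Fin 8, k.val < 4 → sStatus xh .sd k =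
      if k = j then .cl else if k = j' then .wa else sStatus xh (.sh o w) k := by decide

lemma sStep_sd2 : ∀ (xh : Bool) (o w j j' : Fin 8), o.val < 4 → w.val < 4 →
    j.val < 4 → j'.val < 4 → o ≠ w → j ≠ j' → j ≠ o → j ≠ w → j' ≠ o → j' ≠ w →
    ({(0 : Fin 8), mS xh} : Finset (Fin 8)) = {o, j'} →
    ∀ k : Fin 8, k.val < 4 → sStatus xh .sd k =
      if k = j then .wa else if k = j' then .cl else sStatus xh (.sh o w) k := by decide

/-! status-update equations (F side, `4 ≤ k`) -/

lemma fStep_fresh1 : ∀ (j j' : Fin 8), 4 ≤ j.val → 4 ≤ j'.val → j ≠ j' →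
    ∀ k : Fin 8, 4 ≤ k.val → fStatus (.fh j j') k =
      if k = j then .cl else if k = j' then .wa else fStatus .f0 k := by decide

lemma fStep_fresh2 : ∀ (j j' : Fin 8), 4 ≤ j.val → 4 ≤ j'.val → j ≠ j' →
    ∀ k : Fin 8, 4 ≤ k.val → fStatus (.fh j' j) k =
      if k = j then .wa else if k = j' then .cl else fStatus .f0 k := by decide

lemma fStep_fd1 : ∀ (y1 wf j j' : Fin 8), 4 ≤ y1.val → 4 ≤ wf.val → 4 ≤ j.val → 4 ≤ j'.val →
    y1 ≠ wf → j ≠ j' → j ≠ y1 → j ≠ wf → j' ≠ y1 → j' ≠ wf →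
    ∀ k : Fin 8, 4 ≤ k.val → fStatus (.fd y1 j) k =
      if k = j then .cl else if k = j' then .wa else fStatus (.fh y1 wf) k := by decide

lemma fStep_fd2 : ∀ (y1 wf j j' : Fin 8), 4 ≤ y1.val → 4 ≤ wf.val → 4 ≤ j.val → 4 ≤ j'.val →
    y1 ≠ wf → j ≠ j' → j ≠ y1 → j ≠ wf → j' ≠ y1 → j' ≠ wf →
    ∀ k : Fin 8, 4 ≤ k.val → fStatus (.fd y1 j') k =
      if k = j then .wa else if k = j' then .cl else fStatus (.fh y1 wf) k := by decide

/-! split wrappers -/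

lemma hnew_splitS {xh yh : Bool} {s s' : GSSt} {f : GFSt} {j j' : Fin 8} {v v' : GSt}
    (hj : j.val < 4) (hj' : j'.val < 4)
    (hS : ∀ k : Fin 8, k.val < 4 → sStatus xh s' k =
      if k = j then v else if k = j' then v' else sStatus xh s k) :
    ∀ k, statusOf (.post xh yh s' f) k =
      if k = j then v else if k = j' then v' else statusOf (.post xh yh s f) k := by
  intro k
  by_cases h4 : k.val < 4
  · rw [statusPost_S h4, hS k h4, statusPost_S h4]
  · have hkj : k ≠ j := fun h => h4 (h ▸ hj)
    have hkj' : k ≠ j' := fun h => h4 (h ▸ hj')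
    rw [if_neg hkj, if_neg hkj', statusPost_F h4, statusPost_F h4]

lemma hnew_splitF {xh yh : Bool} {s : GSSt} {f f' : GFSt} {j j' : Fin 8} {v v' : GSt}
    (hj : 4 ≤ j.val) (hj' : 4 ≤ j'.val)
    (hF : ∀ k : Fin 8, 4 ≤ k.val → fStatus f' k =
      if k = j then v else if k = j' then v' else fStatus f k) :
    ∀ k, statusOf (.post xh yh s f') k =
      if k = j then v else if k = j' then v' else statusOf (.post xh yh s f) k := by
  intro k
  by_cases h4 : k.val < 4
  · have hkj : k ≠ j := fun h => by subst h; omega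
    have hkj' : k ≠ j' := fun h => by subst h; omega
    rw [if_neg hkj, if_neg hkj', statusPost_S h4, statusPost_S h4]
  · rw [statusPost_F h4, hF k (Nat.le_of_not_lt h4), statusPost_F h4]

end dec

/-! ### specialized advance wrappers -/

section adv2
variable {n : ℕ} {φ : CNF3 (Fin n ⊕ Fin n)} {U C : Finset (GVert n)} {R : Finset (Fin n)}
  {X Y : Fin n → Bool} {st : Fin n → GISt}

lemma PS_consume (hPS : PSFalsWins (PSPred φ) R X Y) {i : Fin n} (hi : i ∈ R) (b : Bool) :
    ∃ c : Bool, PSFalsWins (PSPred φ) (R.erase i)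
      (Function.update X i b) (Function.update Y i c) := by
  rw [PSFalsWins, dif_pos ⟨i, hi⟩] at hPS
  rcases hPS i hi b with h | h
  exacts [⟨true, h⟩, ⟨false, h⟩]

lemma advanceConsume (hInv : GInv U C R X Y st) {x y : GVert n} {i : Fin n} {j j' : Fin 8}
    (hxy : ({x, y} : Finset (GVert n)) = {(i, j), (i, j')}) (hjj' : j ≠ j')
    (hju : statusOf (st i) j = .un) (hj'u : statusOf (st i) j' = .un)
    (hiR : st i = .pre0 ∨ st i = .preA)
    (xh : Bool) (tk : Bool → Bool) (si' : Bool → GISt)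
    (hnew : ∀ c (k : Fin 8), statusOf (si' c) k =
      if k = j then (if tk c then .cl else .wa) else
        if k = j' then (if tk c then .wa else .cl) else statusOf (st i) k)
    (hok : ∀ c, okSt (si' c))
    (hshape : ∀ c, ∃ s f, si' c = .post xh c s f)
    (hPS : PSFalsWins (PSPred φ) R X Y) (ih : IHyp φ U) :
    CWGoal φ U C x y := by
  have hiR' : i ∈ R := (hInv.2.2.1 i).mp hiR
  obtain ⟨c, hPS'⟩ := PS_consume hPS hiR' xh
  obtain ⟨s, f, hsf⟩ := hshape c
  refine advance hInv hxy hjj' hju hj'u (tk c) (si' c) (R.erase i)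
    (Function.update X i xh) (Function.update Y i c) (hnew c) (hok c) ?_ ?_ ?_ ?_ ?_ hPS' ih
  · rw [hsf]
    constructor
    · rintro (h | h) <;> cases h
    · intro h
      simp at h
  · intro xh' yh' s' f' h
    rw [hsf] at h
    cases h
    exact ⟨Function.update_self _ _ _, Function.update_self _ _ _⟩
  · intro i' hi'
    simp [Finset.mem_erase, hi']
  · intro i' hi'
    exact Function.update_of_ne hi' _ _
  · intro i' hi'
    exact Function.update_of_ne hi' _ _

lemma advancePost (hInv : GInv U C R X Y st) {x y : GVert n} {i : Fin n} {j j' : Fin 8}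
    (hxy : ({x, y} : Finset (GVert n)) = {(i, j), (i, j')}) (hjj' : j ≠ j')
    (hju : statusOf (st i) j = .un) (hj'u : statusOf (st i) j' = .un)
    {xh yh : Bool} {s : GSSt} {f : GFSt} (hst : st i = .post xh yh s f)
    (tk : Bool) (si' : GISt)
    (hnew : ∀ k : Fin 8, statusOf si' k =
      if k = j then (if tk then .cl else .wa) else
        if k = j' then (if tk then .wa else .cl) else statusOf (st i) k)
    (hok : okSt si')
    (hshape : ∃ s' f', si' = .post xh yh s' f')
    (hPS : PSFalsWins (PSPred φ) R X Y) (ih : IHyp φ U) :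
    CWGoal φ U C x y := by
  have hiR : i ∉ R := fun h => by
    rcases (hInv.2.2.1 i).mpr h with h' | h' <;> rw [hst] at h' <;> cases h'
  obtain ⟨s', f', hsf⟩ := hshape
  obtain ⟨hX, hY⟩ := hInv.2.2.2 i xh yh s f hst
  refine advance hInv hxy hjj' hju hj'u tk si' R X Y hnew hok ?_ ?_
    (fun _ _ => Iff.rfl) (fun _ _ => rfl) (fun _ _ => rfl) hPS ih
  · rw [hsf]
    constructor
    · rintro (h | h) <;> cases h
    · intro h
      exact absurd h hiR
  · intro xh' yh' s'' f'' h
    rw [hsf] at h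
    cases h
    exact ⟨hX, hY⟩

lemma advanceKeepPre (hInv : GInv U C R X Y st) {x y : GVert n} {i : Fin n} {j j' : Fin 8}
    (hxy : ({x, y} : Finset (GVert n)) = {(i, j), (i, j')}) (hjj' : j ≠ j')
    (hju : statusOf (st i) j = .un) (hj'u : statusOf (st i) j' = .un)
    (hst : st i = .pre0)
    (tk : Bool)
    (hnew : ∀ k : Fin 8, statusOf .preA k =
      if k = j then (if tk then .cl else .wa) else
        if k = j' then (if tk then .wa else .cl) else statusOf (st i) k)
    (hPS : PSFalsWins (PSPred φ) R X Y) (ih : IHyp φ U) :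
    CWGoal φ U C x y := by
  have hiR : i ∈ R := (hInv.2.2.1 i).mp (Or.inl hst)
  refine advance hInv hxy hjj' hju hj'u tk .preA R X Y hnew trivial ?_ ?_
    (fun _ _ => Iff.rfl) (fun _ _ => rfl) (fun _ _ => rfl) hPS ih
  · constructor
    · intro _; exact hiR
    · intro _; exact Or.inr rfl
  · intro xh' yh' s'' f'' h
    cases h

end adv2

/-! ### The pair-edge punishment: deviating S-offers lose for Waiter -/

section sdev
variable {n : ℕ} {φ : CNF3 (Fin n ⊕ Fin n)} {U C : Finset (GVert n)} {R : Finset (Fin n)}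
  {X Y : Fin n → Bool} {st : Fin n → GISt}

lemma sDevWin (hInv : GInv U C R X Y st) {x y : GVert n} {i : Fin n} {j j' : Fin 8}
    (hxy : ({x, y} : Finset (GVert n)) = {(i, j), (i, j')})
    {xh yh : Bool} {f : GFSt} (hst : st i = .post xh yh .s0 f)
    (hj4 : j.val < 4) (hj'4 : j'.val < 4)
    (σ w1 w3 : Fin 8)
    (hσ : σ = j ∨ σ = j')
    (hset : ({(0 : Fin 8), nS xh} : Finset (Fin 8)) = {σ, w1})
    (hσ4 : σ.val < 4) (hw14 : w1.val < 4) (hw34 : w3.val < 4)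
    (hw1j : w1 ≠ j) (hw1j' : w1 ≠ j') (hw3j : w3 ≠ j) (hw3j' : w3 ≠ j')
    (hσw1 : σ ≠ w1) (hσw3 : σ ≠ w3) (hw13 : w1 ≠ w3) :
    CWGoal φ U C x y := by
  have hσor : (i, σ) = (i, j) ∨ (i, σ) = (i, j') := by
    rcases hσ with rfl | rfl
    exacts [Or.inl rfl, Or.inr rfl]
  refine goal_of_take hxy (i, σ) hσor ?_
  have hok := hInv.2.1 i
  rw [hst] at hok
  have hfok := hok.2
  obtain ⟨h0, hnS⟩ := pairElim hset
  have hw1U : (i, w1) ∈ U \ {(i, j), (i, j')} :=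
    cw_memSdiff2 (hInv.memU (by rw [hst, statusPost_S hw14]; rfl))
      (pairNe hw1j) (pairNe hw1j')
  have hw3U : (i, w3) ∈ U \ {(i, j), (i, j')} :=
    cw_memSdiff2 (hInv.memU (by rw [hst, statusPost_S hw34]; rfl))
      (pairNe hw3j) (pairNe hw3j')
  have hσC' : (i, σ) ∈ insert (i, σ) C := Finset.mem_insert_self _ _
  cases f with
  | f0 => exact absurd rfl hfok
  | fd z1 z2 =>
      have hplan : ({z1, z2} : Finset (Fin 8)) = {(planP xh yh).1, (planP xh yh).2} :=
        hfok.2.2.2.2 rfl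
      obtain ⟨hp1, hp2⟩ := pairElim hplan.symm
      have hz1C : (i, z1) ∈ C := hInv.memC (by
        rw [hst, statusPost_F (by have := hfok.1; omega)]; simp [fStatus])
      have hz2C : (i, z2) ∈ C := hInv.memC (by
        rw [hst, statusPost_F (by have := hfok.2.1; omega)]; simp [fStatus])
      refine cw_lemA (punishE_mem i xh yh) hw1U ?_
      intro a ha
      simp only [punishE, Finset.mem_insert, Finset.mem_singleton] at ha
      rcases ha with rfl | rfl | rfl | rfl
      · rcases h0 with h | h <;> rw [h]
        · exact Finset.mem_insert_of_mem hσC'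
        · exact Finset.mem_insert_self _ _
      · rcases hnS with h | h <;> rw [h]
        · exact Finset.mem_insert_of_mem hσC'
        · exact Finset.mem_insert_self _ _
      · rcases hp1 with h | h <;> rw [h]
        · exact Finset.mem_insert_of_mem (Finset.mem_insert_of_mem hz1C)
        · exact Finset.mem_insert_of_mem (Finset.mem_insert_of_mem hz2C)
      · rcases hp2 with h | h <;> rw [h]
        · exact Finset.mem_insert_of_mem (Finset.mem_insert_of_mem hz1C)
        · exact Finset.mem_insert_of_mem (Finset.mem_insert_of_mem hz2C)
  | fh y1 wf =>
      have hy14 : 4 ≤ y1.val := hfok.1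
      have hwf4 : 4 ≤ wf.val := hfok.2.1
      have hyw : y1 ≠ wf := hfok.2.2.1
      obtain ⟨hyP, hwP1, hwP2⟩ := hfok.2.2.2.2 rfl
      obtain ⟨p, hpl, hp14, hp24, hp1y, hp1w, hp2y, hp2w, hp12⟩ :=
        fhPlanData xh yh y1 wf hy14 hwf4 hyw hyP hwP1 hwP2
      obtain ⟨hq1, hq2⟩ := pairElim hpl
      have hy1C : (i, y1) ∈ insert (i, σ) C := Finset.mem_insert_of_mem (hInv.memC (by
        rw [hst, statusPost_F (by omega)]; simp [fStatus]))
      have hw2U : (i, p.1) ∈ U \ {(i, j), (i, j')} :=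
        cw_memSdiff2 (hInv.memU (by
            rw [hst, statusPost_F (by omega)]; simp [fStatus, hp1y, hp1w]))
          (pairNe (Ne.symm (neSF hj4 hp14))) (pairNe (Ne.symm (neSF hj'4 hp14)))
      have hw4U : (i, p.2) ∈ U \ {(i, j), (i, j')} :=
        cw_memSdiff2 (hInv.memU (by
            rw [hst, statusPost_F (by omega)]; simp [fStatus, hp2y, hp2w]))
          (pairNe (Ne.symm (neSF hj4 hp24))) (pairNe (Ne.symm (neSF hj'4 hp24)))
      refine cw_lemE (e := punishE i xh yh) (t1 := {(i, σ), (i, w1), (i, w3)})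
        (t2 := {(i, y1), (i, p.1), (i, p.2)}) (punishE_mem i xh yh)
        (blockTriple (i := i) (Or.inl ⟨hσ4, hw14, hw34⟩) hσw1 hσw3 hw13)
        (blockTriple (i := i) (Or.inr ⟨hy14, hp14, hp24⟩) (Ne.symm hp1y) (Ne.symm hp2y) hp12)
        hw1U hw2U hw3U hw4U
        (pairNe (neSF hw14 hp14)) (pairNe hw13) (pairNe (neSF hw14 hp24))
        (pairNe (Ne.symm (neSF hw34 hp14)).symm.symm) (pairNe hp12) (pairNe (neSF hw34 hp24))
        ?_ ?_ ?_
      · -- punishE ⊆ C' ∪ {(i,w1),(i,p.1)}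
        intro a ha
        simp only [punishE, Finset.mem_insert, Finset.mem_singleton] at ha
        rcases ha with rfl | rfl | rfl | rfl
        · rcases h0 with h | h <;> rw [h]
          · exact Finset.mem_union_left _ hσC'
          · exact Finset.mem_union_right _ (by simp)
        · rcases hnS with h | h <;> rw [h]
          · exact Finset.mem_union_left _ hσC'
          · exact Finset.mem_union_right _ (by simp)
        · rcases hq1 with h | h <;> rw [h]
          · exact Finset.mem_union_left _ hy1C
          · exact Finset.mem_union_right _ (by simp)
        · rcases hq2 with h | h <;> rw [h]
          · exact Finset.mem_union_left _ hy1C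
          · exact Finset.mem_union_right _ (by simp)
      · -- t1 ⊆ C' ∪ {(i,w1),(i,w3)}
        intro a ha
        simp only [Finset.mem_insert, Finset.mem_singleton] at ha
        rcases ha with rfl | rfl | rfl
        · exact Finset.mem_union_left _ hσC'
        · exact Finset.mem_union_right _ (by simp)
        · exact Finset.mem_union_right _ (by simp)
      · -- t2 ⊆ C' ∪ {(i,p.1),(i,p.2)}
        intro a ha
        simp only [Finset.mem_insert, Finset.mem_singleton] at ha
        rcases ha with rfl | rfl | rfl
        · exact Finset.mem_union_left _ hy1C
        · exact Finset.mem_union_right _ (by simp)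
        · exact Finset.mem_union_right _ (by simp)

end sdev

/-! ### Handling an offer of two S-vertices of one index -/

section soffer
variable {n : ℕ} {φ : CNF3 (Fin n ⊕ Fin n)} {U C : Finset (GVert n)} {R : Finset (Fin n)}
  {X Y : Fin n → Bool} {st : Fin n → GISt}

lemma hnew_pre0S1 : ∀ (xh c : Bool) (j j' : Fin 8), j.val < 4 → j'.val < 4 → j ≠ j' →
    ∀ k : Fin 8, statusOf (.post xh c (.sh j j') .f0) k =
      if k = j then .cl else if k = j' then .wa else statusOf .pre0 k := by decide

lemma hnew_pre0S2 : ∀ (xh c : Bool) (j j' : Fin 8), j.val < 4 → j'.val < 4 → j ≠ j' →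
    ∀ k : Fin 8, statusOf (.post xh c (.sh j' j) .f0) k =
      if k = j then .wa else if k = j' then .cl else statusOf .pre0 k := by decide

lemma hnew_pre0_preA1 : ∀ k : Fin 8, statusOf .preA k =
    if k = (0 : Fin 8) then .cl else if k = (3 : Fin 8) then .wa else statusOf .pre0 k := by
  decide

lemma hnew_pre0_preA2 : ∀ k : Fin 8, statusOf .preA k =
    if k = (3 : Fin 8) then .wa else if k = (0 : Fin 8) then .cl else statusOf .pre0 k := by
  decide

lemma hnew_preA1 : ∀ (c : Bool) (k : Fin 8), statusOf (.post false c .sd .f0) k =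
    if k = (1 : Fin 8) then .cl else if k = (2 : Fin 8) then .wa else statusOf .preA k := by
  decide

lemma hnew_preA2 : ∀ (c : Bool) (k : Fin 8), statusOf (.post false c .sd .f0) k =
    if k = (2 : Fin 8) then .wa else if k = (1 : Fin 8) then .cl else statusOf .preA k := by
  decide

lemma statU_preA : ∀ j : Fin 8, j.val < 4 → statusOf .preA j = .un → j = 1 ∨ j = 2 := by
  decide

lemma sMainOk : ∀ (xh : Bool) (j j' : Fin 8), j.val < 4 → j'.val < 4 → j ≠ j' →
    (({j, j'} : Finset (Fin 8)) = {0, nS xh} ∨ ({j, j'} : Finset (Fin 8)) = {mS xh, 3}) →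
    (j = 0 ∨ j = mS xh) → okS xh (.sh j j') := by decide

lemma sMainOk' : ∀ (xh : Bool) (j j' : Fin 8), j.val < 4 → j'.val < 4 → j ≠ j' →
    (({j, j'} : Finset (Fin 8)) = {0, nS xh} ∨ ({j, j'} : Finset (Fin 8)) = {mS xh, 3}) →
    (j' = 0 ∨ j' = mS xh) → okS xh (.sh j' j) := by decide

lemma sDevPick : ∀ (xh : Bool) (j j' : Fin 8), j.val < 4 → j'.val < 4 → j ≠ j' →
    ¬(({j, j'} : Finset (Fin 8)) = {0, nS xh} ∨ ({j, j'} : Finset (Fin 8)) = {mS xh, 3}) →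
    ∃ q : Fin 8 × Fin 8 × Fin 8,
      (q.1 = j ∨ q.1 = j') ∧ ({(0 : Fin 8), nS xh} : Finset (Fin 8)) = {q.1, q.2.1} ∧
      q.1.val < 4 ∧ q.2.1.val < 4 ∧ q.2.2.val < 4 ∧ q.2.1 ≠ j ∧ q.2.1 ≠ j' ∧ q.2.2 ≠ j ∧
      q.2.2 ≠ j' ∧ q.1 ≠ q.2.1 ∧ q.1 ≠ q.2.2 ∧ q.2.1 ≠ q.2.2 := by decide

lemma sOffer (hInv : GInv U C R X Y st) {x y : GVert n} {i : Fin n} {j j' : Fin 8}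
    (hxy : ({x, y} : Finset (GVert n)) = {(i, j), (i, j')}) (hjj' : j ≠ j')
    (hju : statusOf (st i) j = .un) (hj'u : statusOf (st i) j' = .un)
    (hj4 : j.val < 4) (hj'4 : j'.val < 4)
    (hPS : PSFalsWins (PSPred φ) R X Y) (ih : IHyp φ U) :
    CWGoal φ U C x y := by
  cases hst : st i with
  | pre0 =>
      by_cases h03 : ({j, j'} : Finset (Fin 8)) = {0, 3}
      · obtain ⟨h0, h3⟩ := pairElim h03.symm
        rcases h0 with h0 | h0
        · have h3' : (3 : Fin 8) = j' := by
            rcases h3 with h | h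
            · exact absurd (h.trans h0.symm) (by decide)
            · exact h
          subst h0; subst h3'
          exact advanceKeepPre hInv hxy hjj' hju hj'u hst true
            (fun k => by rw [hst]; exact hnew_pre0_preA1 k) hPS ih
        · have h3' : (3 : Fin 8) = j := by
            rcases h3 with h | h
            · exact h
            · exact absurd (h.trans h0.symm) (by decide)
          subst h0; subst h3'
          exact advanceKeepPre hInv hxy hjj' hju hj'u hst false
            (fun k => by rw [hst]; exact hnew_pre0_preA2 k) hPS ih
      · obtain ⟨p, hp, hokp, _⟩ := sPick j j' hj4 hj'4 hjj' h03
        rcases hp with ⟨hp1, hp2⟩ | ⟨hp1, hp2⟩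
        · subst hp1; subst hp2
          refine advanceConsume hInv hxy hjj' hju hj'u (Or.inl hst) (xhS p.1 p.2)
            (fun _ => true) (fun c => .post (xhS p.1 p.2) c (.sh p.1 p.2) .f0)
            (fun c k => by rw [hst]; exact hnew_pre0S1 _ c _ _ hj4 hj'4 hjj' k)
            (fun c => ⟨hokp, fun h => nomatch h⟩) (fun c => ⟨_, _, rfl⟩) hPS ih
        · subst hp1; subst hp2
          refine advanceConsume hInv hxy hjj' hju hj'u (Or.inl hst) (xhS p.2 p.1)
            (fun _ => false) (fun c => .post (xhS p.2 p.1) c (.sh p.1 p.2) .f0)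
            (fun c k => by rw [hst]; exact hnew_pre0S2 _ c _ _ hj4 hj'4 hjj' k)
            (fun c => ⟨hokp, fun h => nomatch h⟩) (fun c => ⟨_, _, rfl⟩) hPS ih
  | preA =>
      have hj12 : j = 1 ∨ j = 2 := statU_preA j hj4 (by rw [hst] at hju; exact hju)
      have hj'12 : j' = 1 ∨ j' = 2 := statU_preA j' hj'4 (by rw [hst] at hj'u; exact hj'u)
      rcases hj12 with rfl | rfl <;> rcases hj'12 with rfl | rfl
      · exact absurd rfl hjj'
      · refine advanceConsume hInv hxy hjj' hju hj'u (Or.inr hst) false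
          (fun _ => true) (fun c => .post false c .sd .f0)
          (fun c k => by rw [hst]; exact hnew_preA1 c k)
          (fun c => ⟨trivial, fun h => nomatch h⟩) (fun c => ⟨_, _, rfl⟩) hPS ih
      · refine advanceConsume hInv hxy hjj' hju hj'u (Or.inr hst) false
          (fun _ => false) (fun c => .post false c .sd .f0)
          (fun c k => by rw [hst]; exact hnew_preA2 c k)
          (fun c => ⟨trivial, fun h => nomatch h⟩) (fun c => ⟨_, _, rfl⟩) hPS ih
      · exact absurd rfl hjj'
  | post xh yh s f =>
      have hok := hInv.2.1 i
      rw [hst] at hok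
      cases s with
      | s0 =>
          by_cases hmain : ({j, j'} : Finset (Fin 8)) = {0, nS xh} ∨
              ({j, j'} : Finset (Fin 8)) = {mS xh, 3}
          · obtain ⟨t, htor, htm⟩ := sMainPick xh j j' hj4 hj'4 hjj' hmain
            rcases htor with rfl | rfl
            · refine advancePost hInv hxy hjj' hju hj'u hst true
                (.post xh yh (.sh t j') f)
                (fun k => by
                  rw [hst]
                  exact hnew_splitS hj4 hj'4 (sStep_fresh1 xh t j' hj4 hj'4 hjj') k)
                ⟨sMainOk xh t j' hj4 hj'4 hjj' hmain htm, okF_weaken hok.2 (fun h => nomatch h)⟩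
                ⟨_, _, rfl⟩ hPS ih
            · refine advancePost hInv hxy hjj' hju hj'u hst false
                (.post xh yh (.sh t j) f)
                (fun k => by
                  rw [hst]
                  exact hnew_splitS hj4 hj'4 (sStep_fresh2 xh j t hj4 hj'4 hjj' ) k)
                ⟨sMainOk' xh j t hj4 hj'4 hjj' hmain htm, okF_weaken hok.2 (fun h => nomatch h)⟩
                ⟨_, _, rfl⟩ hPS ih
          · obtain ⟨q, hq1, hq2, hq3, hq4, hq5, hq6, hq7, hq8, hq9, hq10, hq11, hq12⟩ :=
              sDevPick xh j j' hj4 hj'4 hjj' hmain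
            exact sDevWin hInv hxy hst hj4 hj'4 q.1 q.2.1 q.2.2 hq1 hq2 hq3 hq4 hq5 hq6 hq7
              hq8 hq9 hq10 hq11 hq12
      | sh o w =>
          obtain ⟨ho4, hw4, how⟩ := okS_sh_dat hok.1
          obtain ⟨hjo, hjw⟩ := statU_sh' xh o w j (by rw [hst, statusPost_S hj4] at hju; exact hju)
          obtain ⟨hj'o, hj'w⟩ := statU_sh' xh o w j'
            (by rw [hst, statusPost_S hj'4] at hj'u; exact hj'u)
          obtain ⟨t, htor, htm⟩ := shComplete xh o w j j' hok.1 hj4 hj'4 hjj' hjo hjw hj'o hj'w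
          rcases htor with rfl | rfl
          · refine advancePost hInv hxy hjj' hju hj'u hst true (.post xh yh .sd f)
              (fun k => by
                rw [hst]
                exact hnew_splitS hj4 hj'4
                  (sStep_sd1 xh o w t j' ho4 hw4 hj4 hj'4 how hjj' hjo hjw hj'o hj'w htm) k)
              ⟨trivial, okF_weaken hok.2 (fun h => nomatch h)⟩ ⟨_, _, rfl⟩ hPS ih
          · refine advancePost hInv hxy hjj' hju hj'u hst false (.post xh yh .sd f)
              (fun k => by
                rw [hst]
                exact hnew_splitS hj4 hj'4
                  (sStep_sd2 xh o w j t ho4 hw4 hj4 hj'4 how hjj' hjo hjw hj'o hj'w htm) k)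
              ⟨trivial, okF_weaken hok.2 (fun h => nomatch h)⟩ ⟨_, _, rfl⟩ hPS ih
      | sd =>
          rw [hst, statusPost_S hj4] at hju
          exact absurd hju sStatus_sd_ne_un

end soffer

/-! ### Handling an offer of two F-vertices of one index -/

section foffer
variable {n : ℕ} {φ : CNF3 (Fin n ⊕ Fin n)} {U C : Finset (GVert n)} {R : Finset (Fin n)}
  {X Y : Fin n → Bool} {st : Fin n → GISt}

lemma hnew_pre0F1 : ∀ (xh c : Bool) (j j' : Fin 8), 4 ≤ j.val → 4 ≤ j'.val → j ≠ j' →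
    ∀ k : Fin 8, statusOf (.post xh c .s0 (.fh j j')) k =
      if k = j then .cl else if k = j' then .wa else statusOf .pre0 k := by decide

lemma hnew_pre0F2 : ∀ (xh c : Bool) (j j' : Fin 8), 4 ≤ j.val → 4 ≤ j'.val → j ≠ j' →
    ∀ k : Fin 8, statusOf (.post xh c .s0 (.fh j' j)) k =
      if k = j then .wa else if k = j' then .cl else statusOf .pre0 k := by decide

lemma hnew_preAF1 : ∀ (xh c : Bool) (j j' : Fin 8), 4 ≤ j.val → 4 ≤ j'.val → j ≠ j' →
    ∀ k : Fin 8, statusOf (.post xh c (.sh 0 3) (.fh j j')) k =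
      if k = j then .cl else if k = j' then .wa else statusOf .preA k := by decide

lemma hnew_preAF2 : ∀ (xh c : Bool) (j j' : Fin 8), 4 ≤ j.val → 4 ≤ j'.val → j ≠ j' →
    ∀ k : Fin 8, statusOf (.post xh c (.sh 0 3) (.fh j' j)) k =
      if k = j then .wa else if k = j' then .cl else statusOf .preA k := by decide

lemma okS_sh03 (xh : Bool) : okS xh (.sh 0 3) := ⟨Or.inl rfl, Or.inr rfl⟩

lemma fOffer (hInv : GInv U C R X Y st) {x y : GVert n} {i : Fin n} {j j' : Fin 8}
    (hxy : ({x, y} : Finset (GVert n)) = {(i, j), (i, j')}) (hjj' : j ≠ j')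
    (hju : statusOf (st i) j = .un) (hj'u : statusOf (st i) j' = .un)
    (hj4 : 4 ≤ j.val) (hj'4 : 4 ≤ j'.val)
    (hPS : PSFalsWins (PSPred φ) R X Y) (ih : IHyp φ U) :
    CWGoal φ U C x y := by
  cases hst : st i with
  | pre0 =>
      choose pf hord hokp using fun c => fPick c j j' hj4 hj'4 hjj'
      refine advanceConsume hInv hxy hjj' hju hj'u (Or.inl hst) (xhF j j')
        (fun c => decide ((pf c).1 = j)) (fun c => .post (xhF j j') c .s0 (.fh (pf c).1 (pf c).2))
        ?_ (fun c => ⟨trivial, hokp c⟩) (fun c => ⟨_, _, rfl⟩) hPS ih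
      intro c k
      rcases hord c with ⟨h1, h2⟩ | ⟨h1, h2⟩
      · rw [hst, h1, h2, decide_eq_true (show j = j from rfl)]
        exact hnew_pre0F1 _ c _ _ hj4 hj'4 hjj' k
      · rw [hst, h1, h2, decide_eq_false (Ne.symm hjj' : j' ≠ j)]
        exact hnew_pre0F2 _ c _ _ hj4 hj'4 hjj' k
  | preA =>
      choose pf hord hokp using fun c => fPick c j j' hj4 hj'4 hjj'
      refine advanceConsume hInv hxy hjj' hju hj'u (Or.inr hst) (xhF j j')
        (fun c => decide ((pf c).1 = j))
        (fun c => .post (xhF j j') c (.sh 0 3) (.fh (pf c).1 (pf c).2))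
        ?_ (fun c => ⟨okS_sh03 _, okF_weaken (hokp c) (fun h => nomatch h)⟩)
        (fun c => ⟨_, _, rfl⟩) hPS ih
      intro c k
      rcases hord c with ⟨h1, h2⟩ | ⟨h1, h2⟩
      · rw [hst, h1, h2, decide_eq_true (show j = j from rfl)]
        exact hnew_preAF1 _ c _ _ hj4 hj'4 hjj' k
      · rw [hst, h1, h2, decide_eq_false (Ne.symm hjj' : j' ≠ j)]
        exact hnew_preAF2 _ c _ _ hj4 hj'4 hjj' k
  | post xh yh s f =>
      have hok := hInv.2.1 i
      rw [hst] at hok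
      cases f with
      | f0 =>
          have hs0 : s ≠ .s0 := hok.2
          obtain ⟨p, hp, hokp⟩ := f0Pick xh yh j j' hj4 hj'4 hjj'
          rcases hp with ⟨hp1, hp2⟩ | ⟨hp1, hp2⟩
          · subst hp1; subst hp2
            refine advancePost hInv hxy hjj' hju hj'u hst true
              (.post xh yh s (.fh p.1 p.2))
              (fun k => by
                rw [hst]
                exact hnew_splitF hj4 hj'4 (fStep_fresh1 p.1 p.2 hj4 hj'4 hjj') k)
              ⟨hok.1, okF_weaken hokp hs0⟩ ⟨_, _, rfl⟩ hPS ih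
          · subst hp1; subst hp2
            refine advancePost hInv hxy hjj' hju hj'u hst false
              (.post xh yh s (.fh p.1 p.2))
              (fun k => by
                rw [hst]
                exact hnew_splitF hj4 hj'4 (fStep_fresh2 p.2 p.1 hj4 hj'4 hjj') k)
              ⟨hok.1, okF_weaken hokp hs0⟩ ⟨_, _, rfl⟩ hPS ih
      | fh y1 wf =>
          obtain ⟨hy14, hwf4, hyw⟩ := okF_fh_dat hok.2
          obtain ⟨hjy, hjw⟩ := statU_fh' y1 wf j
            (by rw [hst, statusPost_F (by omega)] at hju; exact hju)
          obtain ⟨hj'y, hj'w⟩ := statU_fh' y1 wf j'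
            (by rw [hst, statusPost_F (by omega)] at hj'u; exact hj'u)
          by_cases hs0 : s = .s0
          · subst hs0
            obtain ⟨t, htor, hokfd⟩ :=
              fhCompleteS0 xh yh y1 wf j j' hok.2 hj4 hj'4 hjj' hjy hjw hj'y hj'w
            rcases htor with rfl | rfl
            · refine advancePost hInv hxy hjj' hju hj'u hst true
                (.post xh yh .s0 (.fd y1 t))
                (fun k => by
                  rw [hst]
                  exact hnew_splitF hj4 hj'4
                    (fStep_fd1 y1 wf t j' hy14 hwf4 hj4 hj'4 hyw hjj' hjy hjw hj'y hj'w) k)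
                ⟨trivial, hokfd⟩ ⟨_, _, rfl⟩ hPS ih
            · refine advancePost hInv hxy hjj' hju hj'u hst false
                (.post xh yh .s0 (.fd y1 t))
                (fun k => by
                  rw [hst]
                  exact hnew_splitF hj4 hj'4
                    (fStep_fd2 y1 wf j t hy14 hwf4 hj4 hj'4 hyw hjj' hjy hjw hj'y hj'w) k)
                ⟨trivial, hokfd⟩ ⟨_, _, rfl⟩ hPS ih
          · obtain ⟨t, htor, hokfd⟩ := fhCompleteNS0 xh yh y1 wf j j'
              (okF_weaken hok.2 (fun h => nomatch h)) hj4 hj'4 hjj' hjy hjw hj'y hj'w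
            rcases htor with rfl | rfl
            · refine advancePost hInv hxy hjj' hju hj'u hst true
                (.post xh yh s (.fd y1 t))
                (fun k => by
                  rw [hst]
                  exact hnew_splitF hj4 hj'4
                    (fStep_fd1 y1 wf t j' hy14 hwf4 hj4 hj'4 hyw hjj' hjy hjw hj'y hj'w) k)
                ⟨hok.1, okF_weaken hokfd hs0⟩ ⟨_, _, rfl⟩ hPS ih
            · refine advancePost hInv hxy hjj' hju hj'u hst false
                (.post xh yh s (.fd y1 t))
                (fun k => by
                  rw [hst]
                  exact hnew_splitF hj4 hj'4
                    (fStep_fd2 y1 wf j t hy14 hwf4 hj4 hj'4 hyw hjj' hjy hjw hj'y hj'w) k)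
                ⟨hok.1, okF_weaken hokfd hs0⟩ ⟨_, _, rfl⟩ hPS ih
      | fd z1 z2 =>
          rw [hst, statusPost_F (by omega)] at hju
          exact absurd hju fStatus_fd_ne_un

end foffer

/-! ### The main induction -/

lemma mainLemma (n : ℕ) (φ : CNF3 (Fin n ⊕ Fin n)) :
    ∀ (N : ℕ) (U C : Finset (GVert n)) (R : Finset (Fin n)) (X Y : Fin n → Bool)
      (st : Fin n → GISt), U.card ≤ N → GInv U C R X Y st →
      PSFalsWins (PSPred φ) R X Y → CWClientWins (gadgetEdges n φ) U C := by
  intro N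
  induction N with
  | zero =>
      intro U C R X Y st hcard hInv hPS
      have h2 : ¬ 2 ≤ U.card := by omega
      rw [CWClientWins, dif_neg h2]
      exact baseWin hInv hPS h2
  | succ N ihN =>
      intro U C R X Y st hcard hInv hPS
      by_cases h2 : 2 ≤ U.card
      · rw [CWClientWins, dif_pos h2]
        intro x hx y hy hxy
        have ih : IHyp φ U := fun U' C' R' X' Y' st' hlt hI hP =>
          ihN U' C' R' X' Y' st' (by omega) hI hP
        obtain ⟨i, j⟩ := x
        obtain ⟨i', j'⟩ := y
        show CWGoal φ U C (i, j) (i', j')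
        by_cases hbi : i = i'
        · subst hbi
          have hjj' : j ≠ j' := fun h => hxy (congrArg (Prod.mk i) h)
          have hju := hInv.statusU hx
          have hj'u := hInv.statusU hy
          by_cases hs1 : j.val < 4
          · by_cases hs2 : j'.val < 4
            · exact sOffer hInv rfl hjj' hju hj'u hs1 hs2 hPS ih
            · exact crossWin hInv hx hxy (Or.inr (by simp [hs1, hs2]))
          · by_cases hs2 : j'.val < 4
            · exact crossWin hInv hx hxy (Or.inr (by simp [hs1, hs2]))
            · exact fOffer hInv rfl hjj' hju hj'u (Nat.le_of_not_lt hs1)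
                (Nat.le_of_not_lt hs2) hPS ih
        · exact crossWin hInv hx hxy (Or.inl hbi)
      · rw [CWClientWins, dif_neg h2]
        exact baseWin hInv hPS h2

/-- If Falsifier has a winning strategy in the Paired SAT game on `(φ, X)` with
`X = {(x₁, y₁), …, (xₙ, yₙ)}`, then Client has a winning strategy in the Client-Waiter game on
the associated gadget hypergraph. -/
theorem pairedSAT_falsifier_to_client (n : ℕ) (φ : CNF3 (Fin n ⊕ Fin n))
    (hfals : PSFalsWins (fun X Y => evalCNF (Sum.elim X Y) φ) Finset.univ
      (fun _ => false) (fun _ => false)) :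
    CWClientWins (gadgetEdges n φ) (Finset.univ : Finset (GVert n)) ∅ := by
  refine mainLemma n φ (Finset.univ : Finset (GVert n)).card Finset.univ ∅ Finset.univ
    (fun _ => false) (fun _ => false) (fun _ => .pre0) le_rfl ?_ ?_
  · refine ⟨fun i k => ⟨?_, ?_⟩, fun i => trivial, fun i => ?_,
      fun i xh yh s f h => nomatch h⟩
    · exact iff_of_true (Finset.mem_univ _) rfl
    · exact iff_of_false (Finset.notMem_empty _) (fun h => nomatch h)
    · exact iff_of_true (Or.inl rfl) (Finset.mem_univ _)
  · exact hfals
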